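/- arXiv:2402.14671 — 9 statements merged into one kernel-verified Lean document; each statement's English description precedes it below -/
import Mathlib

section
/- Let X be a Fréchet space with an increasing family of seminorms (‖·‖_k)_{k≥1}, and let d_X(x,y) = Σ_{k=1}^∞ 2^{-k} min(1, ‖x−y‖_k). A linear operator T : X → X satisfies d_X(Tx, Ty) = d_X(x, y) for all x, y ∈ X if and only if ‖Tx‖_k = ‖x‖_k for all x ∈ X and all k ∈ ℕ. -/
private lemma frechet_aux_summable (c : ℕ → ℝ) (hc : ∀ j, 0 ≤ c j) (hc1 : ∀ j, c j ≤ 1) :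
    Summable (fun j : ℕ => (2:ℝ)⁻¹ ^ (j+1) * c j) := by
  have hg : Summable (fun j : ℕ => (2:ℝ)⁻¹ ^ (j+1)) := by
    have := (summable_geometric_of_lt_one (r := (2:ℝ)⁻¹) (by norm_num) (by norm_num)).mul_left
      (2:ℝ)⁻¹
    simpa [pow_succ, mul_comm] using this
  refine Summable.of_nonneg_of_le (fun j => ?_) (fun j => ?_) hg
  · exact mul_nonneg (by positivity) (hc j)
  · nlinarith [hc1 j, pow_nonneg (by norm_num : (0:ℝ) ≤ (2:ℝ)⁻¹) (j+1)]

private lemma frechet_aux_lt (a b : ℕ → ℝ) (ha : ∀ j, 0 ≤ a j) (hb : ∀ j, 0 ≤ b j) (hbmono : Monotone b)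
    (k : ℕ) (heq : ∀ j < k, a j = b j) (hlt : a k < b k) :
    ∃ t : ℝ, 0 < t ∧
      (∑' j : ℕ, (2:ℝ)⁻¹ ^ (j+1) * min 1 (t * a j))
        < ∑' j : ℕ, (2:ℝ)⁻¹ ^ (j+1) * min 1 (t * b j) := by
  have hak : 0 ≤ a k := ha k
  have hbk : 0 < b k := lt_of_le_of_lt hak hlt
  have hab : 0 < a k + b k := by linarith
  refine ⟨2 / (a k + b k), by positivity, ?_⟩
  set t := 2 / (a k + b k) with ht
  have ht0 : 0 < t := by positivity
  have htb : 1 < t * b k := by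
    rw [ht, div_mul_eq_mul_div, lt_div_iff₀ hab]; linarith
  have hta : t * a k < 1 := by
    rw [ht, div_mul_eq_mul_div, div_lt_one hab]; linarith
  have hle : ∀ j : ℕ, min 1 (t * a j) ≤ min 1 (t * b j) := by
    intro j
    rcases lt_trichotomy j k with h | h | h
    · rw [heq j h]
    · subst h
      exact min_le_min le_rfl (mul_le_mul_of_nonneg_left hlt.le ht0.le)
    · have h1 : 1 ≤ t * b j :=
        htb.le.trans (mul_le_mul_of_nonneg_left (hbmono h.le) ht0.le)
      rw [min_eq_left h1]
      exact min_le_left _ _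
  have h0 : ∀ j : ℕ, 0 ≤ min 1 (t * a j) := fun j =>
    le_min zero_le_one (mul_nonneg ht0.le (ha j))
  have hw : ∀ j : ℕ, (0:ℝ) ≤ (2:ℝ)⁻¹ ^ (j+1) := fun j => by positivity
  refine Summable.tsum_lt_tsum_of_nonneg (i := k)
    (fun j => mul_nonneg (hw j) (h0 j))
    (fun j => mul_le_mul_of_nonneg_left (hle j) (hw j)) ?_ ?_
  · have hwk : (0:ℝ) < (2:ℝ)⁻¹ ^ (k+1) := by positivity
    have : min 1 (t * a k) < min 1 (t * b k) := by
      rw [min_eq_right hta.le, min_eq_left htb.le]; exact hta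
    exact (mul_lt_mul_iff_right₀ hwk).mpr this
  · exact frechet_aux_summable _ (fun j => le_min zero_le_one
      (mul_nonneg ht0.le (hb j))) (fun j => min_le_left _ _)

/-- For a Fréchet space `X` with an increasing family of seminorms
`p k`, a linear operator `T` is an isometry for the metric
`d(x,y) = ∑ 2^{-k} min(1, ‖x-y‖_k)` iff it preserves every seminorm. -/
theorem frechet_isometry_iff_seminorm_preserving
    {X : Type*} [AddCommGroup X] [Module ℝ X]
    (p : ℕ → Seminorm ℝ X) (hmono : Monotone p)
    (T : X →ₗ[ℝ] X) :
    (∀ x y : X,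
        (∑' k : ℕ, (2:ℝ)⁻¹ ^ (k+1) * min 1 (p k (T x - T y)))
          = ∑' k : ℕ, (2:ℝ)⁻¹ ^ (k+1) * min 1 (p k (x - y)))
      ↔ (∀ (x : X) (k : ℕ), p k (T x) = p k x) := by
  constructor
  · intro h x k
    induction k using Nat.strong_induction_on with
    | _ k IH =>
      by_contra hne
      -- key: for any t > 0, the two tsums for t • x agree
      have key : ∀ t : ℝ, 0 < t →
          (∑' j : ℕ, (2:ℝ)⁻¹ ^ (j+1) * min 1 (t * p j (T x)))
            = ∑' j : ℕ, (2:ℝ)⁻¹ ^ (j+1) * min 1 (t * p j x) := by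
        intro t ht
        have := h (t • x) 0
        simp only [map_smul, map_zero, sub_zero] at this
        have habs : ∀ z : X, ∀ j : ℕ, p j (t • z) = t * p j z := by
          intro z j
          rw [map_smul_eq_mul, Real.norm_eq_abs, abs_of_pos ht]
        simpa only [habs] using this
      have hamono : Monotone fun j => p j x := fun i j hij => hmono hij x
      have hbmono : Monotone fun j => p j (T x) := fun i j hij => hmono hij (T x)
      rcases lt_or_gt_of_ne hne with hlt | hlt
      · obtain ⟨t, ht, hstrict⟩ := frechet_aux_lt (fun j => p j (T x)) (fun j => p j x)
          (fun j => apply_nonneg _ _) (fun j => apply_nonneg _ _) hamono k (fun j hj => IH j hj) hlt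
        exact absurd (key t ht) (ne_of_lt hstrict)
      · obtain ⟨t, ht, hstrict⟩ := frechet_aux_lt (fun j => p j x) (fun j => p j (T x))
          (fun j => apply_nonneg _ _) (fun j => apply_nonneg _ _) hbmono k (fun j hj => (IH j hj).symm) hlt
        exact absurd (key t ht) (ne_of_gt hstrict)
  · intro h x y
    have : T x - T y = T (x - y) := by rw [map_sub]
    rw [this]
    exact tsum_congr fun k => by rw [h (x - y) k]
end

section
/- Let X be a Fréchet space with an increasing family of seminorms (‖·‖_k)_{k≥1}, and let d'_X(x,y) = Σ_{k=1}^∞ 2^{-k} ‖x−y‖_k / (1 + ‖x−y‖_k). A linear operator T : X → X satisfies d'_X(Tx, Ty) = d'_X(x, y) for all x, y if and only if ‖Tx‖_k = ‖x‖_k for all x and all k. -/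
open Filter Topology

namespace FrechetIso
noncomputable section

def w (k : ℕ) : ℝ := (2:ℝ)⁻¹ ^ (k+1)

lemma w_pos (k : ℕ) : 0 < w k := pow_pos (by norm_num) _

lemma summable_w : Summable w := by
  have h : Summable (fun k : ℕ => (2:ℝ)⁻¹ ^ k) :=
    summable_geometric_of_lt_one (by norm_num) (by norm_num)
  have := h.mul_left (2:ℝ)⁻¹
  apply this.congr
  intro k
  simp [w, pow_succ]
  ring

lemma tsum_w : ∑' k, w k = 1 := by
  have h1 : ∑' k : ℕ, (2:ℝ)⁻¹ ^ k = 2 := by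
    rw [tsum_geometric_of_lt_one (by norm_num) (by norm_num)]; norm_num
  calc ∑' k, w k = ∑' k : ℕ, (2:ℝ)⁻¹ * (2:ℝ)⁻¹ ^ k := by
        apply tsum_congr; intro k; simp [w, pow_succ]; ring
    _ = (2:ℝ)⁻¹ * 2 := by rw [tsum_mul_left, h1]
    _ = 1 := by norm_num

lemma sum_range_w (j : ℕ) : ∑ k ∈ Finset.range j, w k = 1 - (2:ℝ)⁻¹ ^ j := by
  induction j with
  | zero => simp
  | succ n ih => rw [Finset.sum_range_succ, ih]; simp [w, pow_succ]; ring

lemma summable_w_mul {u : ℕ → ℝ} {C : ℝ} (h : ∀ k, |u k| ≤ C) :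
    Summable (fun k => w k * u k) := by
  apply Summable.of_norm_bounded (summable_w.mul_right C)
  intro k
  rw [norm_mul, Real.norm_eq_abs, Real.norm_eq_abs, abs_of_pos (w_pos k)]
  exact mul_le_mul_of_nonneg_left (h k) (w_pos k).le

lemma tsum_tail (j : ℕ) : ∑' k, (if j ≤ k then w k else 0) = (2:ℝ)⁻¹ ^ j := by
  have hs : Summable (fun k => if j ≤ k then w k else 0) := by
    apply summable_w.of_nonneg_of_le
    · intro k; split <;> simp [(w_pos _).le]
    · intro k; split <;> simp [(w_pos _).le]
  have h2 : (fun k => w k - (if j ≤ k then w k else 0)) = fun k => if j ≤ k then 0 else w k := by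
    funext k; split <;> simp
  have h3 : ∑' k, (w k - (if j ≤ k then w k else 0)) = 1 - (2:ℝ)⁻¹ ^ j := by
    rw [h2]
    rw [tsum_eq_sum (s := Finset.range j) (by intro k hk; simp at hk; simp [hk])]
    rw [← sum_range_w j]
    apply Finset.sum_congr rfl
    intro k hk; simp at hk; simp [Nat.not_le.mpr hk, hk]
  rw [Summable.tsum_sub summable_w hs, tsum_w] at h3
  linarith

def c (a : ℕ → ℝ) (k : ℕ) : ℝ := if a k = 0 then 0 else (a k)⁻¹
def e (a : ℕ → ℝ) (s : ℝ) (k : ℕ) : ℝ := if a k = 0 then 0 else (1 + s * a k)⁻¹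
def M (a : ℕ → ℝ) (n : ℕ) : ℝ := ∑' k, w k * (c a k) ^ n
def E (a : ℕ → ℝ) (s : ℝ) (n : ℕ) : ℝ := ∑' k, w k * ((c a k) ^ n * e a s k)
def S (a : ℕ → ℝ) (s : ℝ) : ℝ := ∑' k, w k * (1 + s * a k)⁻¹
def L (a : ℕ → ℝ) : ℝ := ∑' k, w k * (if a k = 0 then (1:ℝ) else 0)

section seq
variable {a : ℕ → ℝ} (h0 : ∀ k, 0 ≤ a k) (hm : Monotone a)

include h0 in
lemma c_nonneg (k : ℕ) : 0 ≤ c a k := by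
  unfold c; split
  · exact le_refl 0
  · exact inv_nonneg.mpr (h0 k)

include h0 hm in
lemma c_bound : ∃ C, 0 ≤ C ∧ ∀ k, c a k ≤ C := by
  classical
  by_cases h : ∃ k, a k ≠ 0
  · set k0 := Nat.find h with hk0
    have hpos : 0 < a k0 := (h0 k0).lt_of_ne (Ne.symm (Nat.find_spec h))
    refine ⟨(a k0)⁻¹, inv_nonneg.mpr hpos.le, fun k => ?_⟩
    unfold c; split
    · exact inv_nonneg.mpr hpos.le
    · rename_i hk
      have hle : k0 ≤ k := Nat.find_min' h hk
      exact inv_anti₀ hpos (hm hle)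
  · push_neg at h
    exact ⟨0, le_refl 0, fun k => by simp [c, h k]⟩

include h0 in
lemma e_mem {s : ℝ} (hs : 0 ≤ s) (k : ℕ) : 0 ≤ e a s k ∧ e a s k ≤ 1 := by
  unfold e; split
  · norm_num
  · have h1 : (1:ℝ) ≤ 1 + s * a k := by nlinarith [mul_nonneg hs (h0 k)]
    constructor
    · positivity
    · exact inv_le_one_of_one_le₀ h1


include h0 hm in
lemma summable_M (n : ℕ) : Summable (fun k => w k * (c a k) ^ n) := by
  obtain ⟨C, hC0, hC⟩ := c_bound h0 hm
  apply summable_w_mul (C := C ^ n)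
  intro k
  rw [abs_of_nonneg (pow_nonneg (c_nonneg h0 k) n)]
  exact pow_le_pow_left₀ (c_nonneg h0 k) (hC k) n

include h0 hm in
lemma summable_E {s : ℝ} (hs : 0 ≤ s) (n : ℕ) :
    Summable (fun k => w k * ((c a k) ^ n * e a s k)) := by
  obtain ⟨C, hC0, hC⟩ := c_bound h0 hm
  apply summable_w_mul (C := C ^ n)
  intro k
  have h1 := e_mem h0 hs k
  have h2 : 0 ≤ (c a k) ^ n := pow_nonneg (c_nonneg h0 k) n
  rw [abs_of_nonneg (mul_nonneg h2 h1.1)]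
  calc (c a k) ^ n * e a s k ≤ (c a k) ^ n * 1 := by
        exact mul_le_mul_of_nonneg_left h1.2 h2
    _ ≤ C ^ n := by rw [mul_one]; exact pow_le_pow_left₀ (c_nonneg h0 k) (hC k) n

include h0 in
lemma summable_S {s : ℝ} (hs : 0 ≤ s) :
    Summable (fun k => w k * (1 + s * a k)⁻¹) := by
  apply summable_w_mul (C := 1)
  intro k
  have h1 : (1:ℝ) ≤ 1 + s * a k := by nlinarith [mul_nonneg hs (h0 k)]
  rw [abs_of_nonneg (by positivity)]
  exact inv_le_one_of_one_le₀ h1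

lemma summable_L : Summable (fun k => w k * (if a k = 0 then (1:ℝ) else 0)) := by
  apply summable_w_mul (C := 1)
  intro k; split <;> norm_num

include h0 hm in
lemma S_eq_L_add_E {s : ℝ} (hs : 0 ≤ s) : S a s = L a + E a s 0 := by
  have hcongr : ∀ k, w k * (1 + s * a k)⁻¹ =
      w k * (if a k = 0 then (1:ℝ) else 0) + w k * ((c a k) ^ 0 * e a s k) := by
    intro k
    by_cases hk : a k = 0 <;> simp [e, hk] <;> ring
  rw [S, tsum_congr hcongr, Summable.tsum_add summable_L (summable_E h0 hm hs 0)]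
  rfl


include h0 in
lemma tendsto_S : Tendsto (fun s => S a s) atTop
    (𝓝 (L a)) := by
  apply tendsto_tsum_of_dominated_convergence (bound := w) summable_w
  · intro k
    by_cases hk : a k = 0
    · simpa [hk] using tendsto_const_nhds
    · have hak : 0 < a k := (h0 k).lt_of_ne (Ne.symm hk)
      have h1 : Tendsto (fun s : ℝ => 1 + s * a k) atTop atTop :=
        tendsto_atTop_add_const_left _ 1 (Tendsto.atTop_mul_const hak tendsto_id)
      have h2 : Tendsto (fun s : ℝ => (1 + s * a k)⁻¹) atTop (𝓝 0) :=
        h1.inv_tendsto_atTop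
      simpa [hk] using h2.const_mul (w k)
  · filter_upwards [eventually_ge_atTop (0:ℝ)] with s hs
    intro k
    have h1 : (1:ℝ) ≤ 1 + s * a k := by nlinarith [mul_nonneg hs (h0 k)]
    rw [Real.norm_eq_abs,
      abs_of_nonneg (mul_nonneg (w_pos k).le (inv_nonneg.mpr (by linarith)))]
    calc w k * (1 + s * a k)⁻¹ ≤ w k * 1 :=
          mul_le_mul_of_nonneg_left (inv_le_one_of_one_le₀ h1) (w_pos k).le
      _ = w k := mul_one _

include h0 hm in
lemma tendsto_E (n : ℕ) : Tendsto (fun s => E a s n) atTop (𝓝 0) := by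
  obtain ⟨C, hC0, hC⟩ := c_bound h0 hm
  have h0' : (0:ℝ) = ∑' k : ℕ, (0:ℝ) := by simp
  rw [h0']
  apply tendsto_tsum_of_dominated_convergence (bound := fun k => w k * C ^ n)
      (summable_w.mul_right _)
  · intro k
    by_cases hk : a k = 0
    · simpa [E, e, hk] using tendsto_const_nhds
    · have hak : 0 < a k := (h0 k).lt_of_ne (Ne.symm hk)
      have h1 : Tendsto (fun s : ℝ => 1 + s * a k) atTop atTop :=
        tendsto_atTop_add_const_left _ 1 (Tendsto.atTop_mul_const hak tendsto_id)
      have h2 : Tendsto (fun s : ℝ => (1 + s * a k)⁻¹) atTop (𝓝 0) :=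
        h1.inv_tendsto_atTop
      have h3 := (h2.const_mul ((c a k) ^ n)).const_mul (w k)
      simpa [e, hk, mul_assoc] using h3
  · filter_upwards [eventually_ge_atTop (0:ℝ)] with s hs
    intro k
    have h1 := e_mem h0 hs k
    have h2 : 0 ≤ (c a k) ^ n := pow_nonneg (c_nonneg h0 k) n
    rw [Real.norm_eq_abs,
      abs_of_nonneg (mul_nonneg (w_pos k).le (mul_nonneg h2 h1.1))]
    apply mul_le_mul_of_nonneg_left _ (w_pos k).le
    calc (c a k) ^ n * e a s k ≤ (c a k) ^ n * 1 :=
          mul_le_mul_of_nonneg_left h1.2 h2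
      _ ≤ C ^ n := by rw [mul_one]; exact pow_le_pow_left₀ (c_nonneg h0 k) (hC k) n

include h0 hm in
lemma E_rec {s : ℝ} (hs : 0 < s) (n : ℕ) :
    s * E a s n = M a (n+1) - E a s (n+1) := by
  have key : ∀ k, s * (w k * ((c a k) ^ n * e a s k)) =
      w k * (c a k) ^ (n+1) - w k * ((c a k) ^ (n+1) * e a s k) := by
    intro k
    by_cases hk : a k = 0
    · simp [c, e, hk]
    · have hak : 0 < a k := (h0 k).lt_of_ne (Ne.symm hk)
      have hd : (0:ℝ) < 1 + s * a k := by nlinarith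
      simp only [c, e, hk, if_neg, ↓reduceIte]
      field_simp
      ring_nf
      simp [hk]
  calc s * E a s n = ∑' k, s * (w k * ((c a k) ^ n * e a s k)) := by
        rw [E, tsum_mul_left]
    _ = ∑' k, (w k * (c a k) ^ (n+1) - w k * ((c a k) ^ (n+1) * e a s k)) :=
        tsum_congr key
    _ = M a (n+1) - E a s (n+1) :=
        Summable.tsum_sub (summable_M h0 hm (n+1)) (summable_E h0 hm hs.le (n+1))


lemma summable_tail (j : ℕ) : Summable (fun k => if j ≤ k then w k else 0) := by
  apply summable_w.of_nonneg_of_le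
  · intro k; split <;> simp [(w_pos _).le]
  · intro k; split <;> simp [(w_pos _).le]

include h0 hm in
lemma aux_final {b : ℕ → ℝ} (h0b : ∀ k, 0 ≤ b k) (hmb : Monotone b)
    (hzero : ∀ i, a i = 0 ↔ b i = 0)
    (hM : ∀ n, M a n = M b n) (j : ℕ) (hjmin : ∀ i, i < j → a i = b i)
    (hlt : c b j < c a j) : False := by
  have hbj : b j ≠ 0 := by
    intro hb
    have ha : a j = 0 := (hzero j).mpr hb
    rw [c, c, if_pos ha, if_pos hb] at hlt
    exact lt_irrefl 0 hlt
  have haj : a j ≠ 0 := fun ha => hbj ((hzero j).mp ha)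
  have hbpos : 0 < b j := (h0b j).lt_of_ne (Ne.symm hbj)
  have hcb : c b j = (b j)⁻¹ := if_neg hbj
  have hca : c a j = (a j)⁻¹ := if_neg haj
  have hcbpos : 0 < c b j := by rw [hcb]; positivity
  have hcapos : 0 < c a j := lt_trans hcbpos hlt
  have hr : c b j / c a j < 1 := (div_lt_one hcapos).mpr hlt
  obtain ⟨n, hn⟩ := exists_pow_lt_of_lt_one (by norm_num : (0:ℝ) < 2⁻¹) hr
  have hpow : (c b j) ^ n < 2⁻¹ * (c a j) ^ n := by
    rw [div_pow] at hn
    have hcan : 0 < (c a j) ^ n := pow_pos hcapos n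
    calc (c b j) ^ n = ((c b j)^n / (c a j)^n) * (c a j)^n := by field_simp
      _ < 2⁻¹ * (c a j) ^ n := by exact mul_lt_mul_of_pos_right hn hcan
  set g : ℕ → ℝ := fun k =>
    (if k = j then w j * (c a j) ^ n else 0) - (if j ≤ k then w k else 0) * (c b j) ^ n
    with hg
  have hsum1 : Summable (fun k => if k = j then w j * (c a j) ^ n else (0:ℝ)) := by
    apply summable_of_ne_finset_zero (s := {j})
    intro k hk
    simp at hk
    simp [hk]
  have hsum2 : Summable (fun k => (if j ≤ k then w k else 0) * (c b j) ^ n) :=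
    (summable_tail j).mul_right _
  have hsumg : Summable g := hsum1.sub hsum2
  have hsumf : Summable (fun k => w k * (c a k) ^ n - w k * (c b k) ^ n) :=
    (summable_M h0 hm n).sub (summable_M h0b hmb n)
  have hgle : ∀ k, g k ≤ w k * (c a k) ^ n - w k * (c b k) ^ n := by
    intro k
    rcases lt_trichotomy k j with hk | hk | hk
    · have : a k = b k := hjmin k hk
      simp [hg, Nat.ne_of_lt hk, Nat.not_le.mpr hk, c, this]
    · subst hk
      simp [hg]
    · have h1 : ¬ (k = j) := Nat.ne_of_gt hk
      have h2 : j ≤ k := le_of_lt hk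
      have h3 : c b k ≤ c b j := by
        have hbk : 0 < b k := lt_of_lt_of_le hbpos (hmb h2)
        rw [hcb, c, if_neg (ne_of_gt hbk)]
        exact inv_anti₀ hbpos (hmb h2)
      have h4 : (c b k) ^ n ≤ (c b j) ^ n :=
        pow_le_pow_left₀ (c_nonneg h0b k) h3 n
      have h5 : 0 ≤ w k * (c a k) ^ n :=
        mul_nonneg (w_pos k).le (pow_nonneg (c_nonneg h0 k) n)
      simp only [hg, if_neg h1, if_pos h2]
      nlinarith [mul_le_mul_of_nonneg_left h4 (w_pos k).le]
  have htsumg : ∑' k, g k = w j * (c a j) ^ n - (2:ℝ)⁻¹ ^ j * (c b j) ^ n := by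
    rw [hg, Summable.tsum_sub hsum1 hsum2, tsum_ite_eq, tsum_mul_right, tsum_tail]
  have hfz : ∑' k, (w k * (c a k) ^ n - w k * (c b k) ^ n) = 0 := by
    rw [Summable.tsum_sub (summable_M h0 hm n) (summable_M h0b hmb n)]
    have := hM n
    rw [M, M] at this
    linarith
  have hle := Summable.tsum_le_tsum hgle hsumg hsumf
  rw [htsumg, hfz] at hle
  have hwj : w j = (2:ℝ)⁻¹ ^ j * 2⁻¹ := by rw [w, pow_succ]
  have hj2 : (0:ℝ) < (2:ℝ)⁻¹ ^ j := by positivity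
  rw [hwj] at hle
  have hh := mul_lt_mul_of_pos_left hpow hj2
  nlinarith [hh, hle]

end seq

lemma core {a b : ℕ → ℝ} (h0a : ∀ k, 0 ≤ a k) (h0b : ∀ k, 0 ≤ b k)
    (hma : Monotone a) (hmb : Monotone b)
    (H : ∀ s : ℝ, 0 ≤ s →
      ∑' k, w k * (s * a k / (1 + s * a k)) = ∑' k, w k * (s * b k / (1 + s * b k))) :
    ∀ k, a k = b k := by
  classical
  have Sform : ∀ (u : ℕ → ℝ), (∀ k, 0 ≤ u k) → ∀ s : ℝ, 0 ≤ s →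
      ∑' k, w k * (s * u k / (1 + s * u k)) = 1 - S u s := by
    intro u h0 s hs
    have hterm : ∀ k, w k * (s * u k / (1 + s * u k)) = w k - w k * (1 + s * u k)⁻¹ := by
      intro k
      have hd : (0:ℝ) < 1 + s * u k := by nlinarith [mul_nonneg hs (h0 k)]
      have hd' : (1 + s * u k) ≠ 0 := ne_of_gt hd
      field_simp
      ring
    rw [tsum_congr hterm, Summable.tsum_sub summable_w (summable_S h0 hs), tsum_w]
    rfl
  have hS : ∀ s : ℝ, 0 ≤ s → S a s = S b s := by
    intro s hs
    have h1 := H s hs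
    rw [Sform a h0a s hs, Sform b h0b s hs] at h1
    linarith
  have hSev : (fun s => S a s) =ᶠ[atTop] fun s => S b s := by
    filter_upwards [eventually_ge_atTop (0:ℝ)] with s hs using hS s hs
  have hL : L a = L b :=
    tendsto_nhds_unique ((tendsto_S h0a).congr' hSev) (tendsto_S h0b)
  have hzero_half : ∀ (u v : ℕ → ℝ), (∀ k, 0 ≤ u k) → (∀ k, 0 ≤ v k) → Monotone u → Monotone v →
      L u = L v → ∀ j, u j = 0 → v j = 0 := by
    intro u v h0u h0v hmu hmv hLuv j hu
    by_contra hv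
    have hub : ∀ k, w k * (if v k = 0 then (1:ℝ) else 0) ≤ (if k < j then w k else 0) := by
      intro k
      by_cases hvk : v k = 0
      · have hkj : k < j := by
          by_contra hkj
          push_neg at hkj
          have h1 : v j ≤ v k := hmv hkj
          exact hv (le_antisymm (h1.trans (le_of_eq hvk)) (h0v j))
        simp [hvk, hkj, le_refl]
      · simp only [if_neg hvk, mul_zero]
        split <;> simp [(w_pos _).le]
    have hsub : Summable (fun k => if k < j then w k else (0:ℝ)) := by
      apply summable_of_ne_finset_zero (s := Finset.range j)
      intro k hk
      simp only [Finset.mem_range] at hk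
      simp [hk]
    have h1 : L v ≤ 1 - (2:ℝ)⁻¹ ^ j := by
      have h2 := Summable.tsum_le_tsum hub summable_L hsub
      have h2b : ∑' (i : ℕ), (if i < j then w i else (0:ℝ)) = ∑ k ∈ Finset.range j, w k := by
        rw [tsum_eq_sum (s := Finset.range j)
          (by intro k hk; simp only [Finset.mem_range] at hk; simp [hk])]
        apply Finset.sum_congr rfl
        intro k hk
        simp only [Finset.mem_range] at hk
        simp [hk]
      calc L v ≤ ∑' (i : ℕ), (if i < j then w i else (0:ℝ)) := h2
        _ = ∑ k ∈ Finset.range j, w k := h2b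
        _ = 1 - (2:ℝ)⁻¹ ^ j := sum_range_w j
    have h3 : 1 - (2:ℝ)⁻¹ ^ (j+1) ≤ L u := by
      have h4 : ∑ k ∈ Finset.range (j+1), (w k * (if u k = 0 then (1:ℝ) else 0))
          = 1 - (2:ℝ)⁻¹ ^ (j+1) := by
        rw [← sum_range_w (j+1)]
        apply Finset.sum_congr rfl
        intro k hk
        simp only [Finset.mem_range] at hk
        have huk : u k = 0 := le_antisymm
          ((hmu (Nat.lt_succ_iff.mp hk)).trans (le_of_eq hu)) (h0u k)
        simp [huk]
      rw [← h4]
      apply Summable.sum_le_tsum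
      · intro k _
        split <;> simp [(w_pos _).le]
      · exact summable_L
    have h5 : (2:ℝ)⁻¹ ^ (j+1) < (2:ℝ)⁻¹ ^ j := by
      apply pow_lt_pow_right_of_lt_one₀ (by norm_num) (by norm_num)
      omega
    rw [hLuv] at h3
    linarith
  have hzero : ∀ j, a j = 0 ↔ b j = 0 := fun j =>
    ⟨hzero_half a b h0a h0b hma hmb hL j, hzero_half b a h0b h0a hmb hma hL.symm j⟩
  have hEM : ∀ n, (∀ s : ℝ, 0 < s → E a s n = E b s n) ∧ M a n = M b n := by
    intro n
    induction n with
    | zero =>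
      constructor
      · intro s hs
        have h1 := hS s hs.le
        rw [S_eq_L_add_E h0a hma hs.le, S_eq_L_add_E h0b hmb hs.le, hL] at h1
        linarith
      · have hM0 : ∀ (u : ℕ → ℝ), M u 0 = 1 := by
          intro u
          rw [M]
          simp only [pow_zero, mul_one]
          exact tsum_w
        rw [hM0, hM0]
    | succ n ih =>
      have hE := ih.1
      have hDconst : ∀ s : ℝ, 0 < s → E a s (n+1) - E b s (n+1) = M a (n+1) - M b (n+1) := by
        intro s hs
        have h1 := E_rec h0a hma hs n
        have h2 := E_rec h0b hmb hs n
        have h3 : s * E a s n = s * E b s n := by rw [hE s hs]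
        linarith
      have htend : Tendsto (fun s => E a s (n+1) - E b s (n+1)) atTop (𝓝 0) := by
        have := (tendsto_E h0a hma (n+1)).sub (tendsto_E h0b hmb (n+1))
        simpa using this
      have hev : (fun s => E a s (n+1) - E b s (n+1)) =ᶠ[atTop]
          (fun _ => M a (n+1) - M b (n+1)) := by
        filter_upwards [eventually_gt_atTop (0:ℝ)] with s hs using hDconst s hs
      have hM1 : (0:ℝ) = M a (n+1) - M b (n+1) :=
        tendsto_nhds_unique (htend.congr' hev) tendsto_const_nhds
      constructor
      · intro s hs
        have := hDconst s hs
        linarith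
      · linarith
  intro k
  by_contra hne0
  have hex : ∃ k, a k ≠ b k := ⟨k, hne0⟩
  have hne : a (Nat.find hex) ≠ b (Nat.find hex) := Nat.find_spec hex
  set j := Nat.find hex with hj
  have hjmin : ∀ i, i < j → a i = b i := by
    intro i hi
    have := Nat.find_min hex hi
    simpa using this
  have hMall : ∀ n, M a n = M b n := fun n => (hEM n).2
  have haj : a j ≠ 0 := by
    intro h
    exact hne (by rw [h, (hzero j).mp h])
  have hbj : b j ≠ 0 := fun h => haj ((hzero j).mpr h)
  have hcne : c a j ≠ c b j := by
    rw [c, c, if_neg haj, if_neg hbj]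
    intro h
    exact hne (by rw [← inv_inv (a j), h, inv_inv])
  rcases hcne.lt_or_gt with h | h
  · exact aux_final h0b hmb h0a hma (fun i => (hzero i).symm)
      (fun n => (hMall n).symm) j (fun i hi => (hjmin i hi).symm) h
  · exact aux_final h0a hma h0b hmb hzero hMall j hjmin h

end
end FrechetIso

/-- For a Fréchet space `X` with an increasing family of seminorms
`p k`, a linear operator `T` is an isometry for the metric
`d'(x,y) = ∑ 2^{-k} ‖x-y‖_k / (1 + ‖x-y‖_k)` iff it preserves every seminorm. -/
theorem frechet_isometry_iff_seminorm_preserving'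
    {X : Type*} [AddCommGroup X] [Module ℝ X]
    (p : ℕ → Seminorm ℝ X) (hmono : Monotone p)
    (T : X →ₗ[ℝ] X) :
    (∀ x y : X,
        (∑' k : ℕ, (2:ℝ)⁻¹ ^ (k+1) * (p k (T x - T y) / (1 + p k (T x - T y))))
          = ∑' k : ℕ, (2:ℝ)⁻¹ ^ (k+1) * (p k (x - y) / (1 + p k (x - y))))
      ↔ (∀ (x : X) (k : ℕ), p k (T x) = p k x) := by
  constructor
  · intro hiso x k
    refine FrechetIso.core (a := fun k => p k (T x)) (b := fun k => p k x)
      (fun k => apply_nonneg _ _) (fun k => apply_nonneg _ _)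
      (fun i j hij => hmono hij (T x)) (fun i j hij => hmono hij x) ?_ k
    intro s hs
    have h := hiso (s • x) 0
    have hsm : ∀ (v : X) (k : ℕ), p k (s • v) = s * p k v := by
      intro v k
      rw [map_smul_eq_mul, Real.norm_eq_abs, abs_of_nonneg hs]
    simp only [map_zero, sub_zero, map_smul, hsm] at h
    exact h
  · intro hp x y
    have hk : ∀ k, p k (T x - T y) = p k (x - y) := by
      intro k
      rw [← map_sub]
      exact hp (x - y) k
    exact tsum_congr fun k => by rw [hk k]
end

section
/- Let ε > 0 and let g be holomorphic on (1+ε)𝔻 with g(𝕋) ⊆ 𝕋 (the unit circle maps into itself). Then g restricted to the closed unit disc is a finite Blaschke product, i.e., g(z) = e^{iθ} z^N ∏_{j=1}^{K} (z − α_j)/(1 − conj(α_j) z) for some θ ∈ ℝ, N, K ∈ ℕ and α_j ∈ 𝔻 ∖ {0}. -/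
open Metric Complex Set

namespace BlaschkeProof

open Filter

/-! ### Order-of-vanishing bookkeeping -/

open scoped Classical in
/-- The order of vanishing of `f` at `z₀` as a natural number (junk value otherwise). -/
noncomputable def mOrd (f : ℂ → ℂ) (z₀ : ℂ) : ℕ :=
  if h : AnalyticAt ℂ f z₀ then (analyticOrderAt f z₀).toNat else 0

lemma mOrd_eq {f : ℂ → ℂ} {z₀ : ℂ} (hf : AnalyticAt ℂ f z₀) {n : ℕ}
    (h : analyticOrderAt f z₀ = n) : mOrd f z₀ = n := by
  classical
  simp only [mOrd, dif_pos hf, h, ENat.toNat_coe]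

open scoped Classical in
/-- Total number of zeros (with multiplicity) of `f` in the closed unit disc. -/
noncomputable def M (f : ℂ → ℂ) : ℕ :=
  if h : {z | z ∈ closedBall (0:ℂ) 1 ∧ f z = 0}.Finite then h.toFinset.sum (mOrd f) else 0

lemma M_eq {f : ℂ → ℂ} (h : {z | z ∈ closedBall (0:ℂ) 1 ∧ f z = 0}.Finite) :
    M f = h.toFinset.sum (mOrd f) := by
  classical
  simp only [M, dif_pos h]

lemma order_eq_zero_of_ne {f : ℂ → ℂ} {z₀ : ℂ} (hf : AnalyticAt ℂ f z₀)
    (h0 : f z₀ ≠ 0) : analyticOrderAt f z₀ = (0 : ℕ) := by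
  rw [hf.analyticOrderAt_eq_natCast]
  exact ⟨f, hf, h0, by filter_upwards with z; simp⟩

lemma order_mul {u v : ℂ → ℂ} {z₀ : ℂ} (hu : AnalyticAt ℂ u z₀) (hv : AnalyticAt ℂ v z₀)
    (huv : AnalyticAt ℂ (fun z => u z * v z) z₀)
    {m n : ℕ} (hm : analyticOrderAt u z₀ = m) (hn : analyticOrderAt v z₀ = n) :
    analyticOrderAt (fun z => u z * v z) z₀ = ((m + n : ℕ) : ℕ∞) := by
  rw [hu.analyticOrderAt_eq_natCast] at hm; rw [hv.analyticOrderAt_eq_natCast] at hn; rw [huv.analyticOrderAt_eq_natCast]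
  obtain ⟨g, hg, hg0, hgeq⟩ := hm
  obtain ⟨h, hh, hh0, hheq⟩ := hn
  refine ⟨fun z => g z * h z, hg.mul hh, mul_ne_zero hg0 hh0, ?_⟩
  filter_upwards [hgeq, hheq] with z h1 h2
  simp only [smul_eq_mul] at *
  rw [h1, h2]; ring

lemma order_linear_self {α : ℂ} (h : AnalyticAt ℂ (fun z => z - α) α) :
    analyticOrderAt (fun z => z - α) α = (1 : ℕ) := by
  rw [h.analyticOrderAt_eq_natCast]
  refine ⟨fun _ => 1, analyticAt_const, one_ne_zero, by filter_upwards with z; simp⟩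

lemma one_le_of_order {f : ℂ → ℂ} {z₀ : ℂ} (hf : AnalyticAt ℂ f z₀) {n : ℕ}
    (h : analyticOrderAt f z₀ = n) (h0 : f z₀ = 0) : 1 ≤ n := by
  rcases Nat.eq_zero_or_pos n with rfl | h1
  · exfalso
    rw [hf.analyticOrderAt_eq_natCast] at h
    obtain ⟨g, hg, hg0, hgeq⟩ := h
    have := hgeq.self_of_nhds
    simp [h0] at this
    exact hg0 this.symm
  · exact h1

/-! ### Elementary facts -/

lemma abs_le_one_of_mem {z : ℂ} (hz : z ∈ closedBall (0:ℂ) 1) : ‖z‖ ≤ 1 := by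
  rw [← dist_zero_right]; exact mem_closedBall.mp hz

lemma abs_one_sub_conj_mul {α z : ℂ} (hz : ‖z‖ = 1) :
    ‖1 - (starRingEnd ℂ) α * z‖ = ‖z - α‖ := by
  have h1 : z * (starRingEnd ℂ) z = 1 := by
    rw [Complex.mul_conj]
    norm_cast
    rw [Complex.normSq_eq_norm_sq, hz]; norm_num
  calc ‖1 - (starRingEnd ℂ) α * z‖
      = ‖(starRingEnd ℂ) (1 - (starRingEnd ℂ) α * z)‖ := (Complex.norm_conj _).symm
    _ = ‖1 - α * (starRingEnd ℂ) z‖ := by simp [map_sub, map_mul]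
    _ = ‖z‖ * ‖1 - α * (starRingEnd ℂ) z‖ := by rw [hz, one_mul]
    _ = ‖z * (1 - α * (starRingEnd ℂ) z)‖ := (norm_mul _ _).symm
    _ = ‖z - α‖ := by
        congr 1
        have : z * (1 - α * (starRingEnd ℂ) z) = z - α * (z * (starRingEnd ℂ) z) := by ring
        rw [this, h1, mul_one]

variable {ε : ℝ} {f : ℂ → ℂ}

lemma one_mem_ball (hε : 0 < ε) : (1:ℂ) ∈ ball (0:ℂ) (1+ε) := by
  simp only [mem_ball, dist_zero_right, norm_one]
  linarith

lemma cb_subset (hε : 0 < ε) : closedBall (0:ℂ) 1 ⊆ ball (0:ℂ) (1+ε) :=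
  closedBall_subset_ball (by linarith)

/-! ### Zeros are finite -/

lemma not_ev_zero (hε : 0 < ε) (hf : DifferentiableOn ℂ f (ball 0 (1+ε)))
    (hmap : ∀ z ∈ sphere (0:ℂ) 1, ‖f z‖ = 1)
    {z : ℂ} (hz : z ∈ ball (0:ℂ) (1+ε)) : ¬ (∀ᶠ w in nhds z, f w = 0) := by
  intro h
  have hA : AnalyticOnNhd ℂ f (ball 0 (1+ε)) := hf.analyticOnNhd isOpen_ball
  have := hA.eqOn_zero_of_preconnected_of_eventuallyEq_zero
    (convex_ball (0:ℂ) (1+ε)).isPreconnected hz h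
  have h1 : f 1 = 0 := this (one_mem_ball hε)
  have h2 : ‖f 1‖ = 1 := hmap 1 (by simp)
  rw [h1] at h2; simp at h2

lemma zeros_finite (hε : 0 < ε) (hf : DifferentiableOn ℂ f (ball 0 (1+ε)))
    (hmap : ∀ z ∈ sphere (0:ℂ) 1, ‖f z‖ = 1) :
    {z | z ∈ closedBall (0:ℂ) 1 ∧ f z = 0}.Finite := by
  set S := {z | z ∈ closedBall (0:ℂ) 1 ∧ f z = 0} with hS
  have hA : AnalyticOnNhd ℂ f (ball 0 (1+ε)) := hf.analyticOnNhd isOpen_ball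
  have hSeq : S = closedBall (0:ℂ) 1 ∩ f ⁻¹' {0} := by
    ext z; simp [hS]
  have hclosed : IsClosed S := by
    rw [hSeq]
    exact (hf.continuousOn.mono (cb_subset hε)).preimage_isClosed_of_isClosed
      isClosed_closedBall isClosed_singleton
  have hcomp : IsCompact S := (isCompact_closedBall (0:ℂ) 1).of_isClosed_subset hclosed
    (fun z hz => hz.1)
  have hdisc : DiscreteTopology S := by
    rw [discreteTopology_subtype_iff]
    intro x hx
    have hxb : x ∈ ball (0:ℂ) (1+ε) := cb_subset hε hx.1
    rcases (hA x hxb).eventually_eq_zero_or_eventually_ne_zero with h | h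
    · exact absurd h (not_ev_zero hε hf hmap hxb)
    · rw [inf_principal_eq_bot]
      filter_upwards [h] with w hw
      simp only [hS, mem_compl_iff, mem_setOf_eq, not_and]
      intro _; exact hw
  exact hcomp.finite ⟨hdisc⟩

/-! ### Base case: no zeros implies constant of modulus one -/

lemma base_case (hε : 0 < ε) (hf : DifferentiableOn ℂ f (ball 0 (1+ε)))
    (hmap : ∀ z ∈ sphere (0:ℂ) 1, ‖f z‖ = 1)
    (hzero : ∀ z ∈ closedBall (0:ℂ) 1, f z ≠ 0) :
    ∃ θ : ℝ, ∀ z ∈ closedBall (0:ℂ) 1, f z = Complex.exp (θ * Complex.I) := by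
  have hsub : closedBall (0:ℂ) 1 ⊆ ball (0:ℂ) (1+ε) := cb_subset hε
  have hsub' : ball (0:ℂ) 1 ⊆ ball (0:ℂ) (1+ε) := ball_subset_ball (by linarith)
  have hclos : closure (ball (0:ℂ) 1) = closedBall (0:ℂ) 1 := closure_ball 0 one_ne_zero
  have hcont : ContinuousOn f (closedBall (0:ℂ) 1) := hf.continuousOn.mono hsub
  have hdc : DiffContOnCl ℂ f (ball (0:ℂ) 1) :=
    ⟨hf.mono hsub', by rw [hclos]; exact hcont⟩
  have hub : ∀ z ∈ closedBall (0:ℂ) 1, ‖f z‖ ≤ 1 := by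
    intro z hz
    refine Complex.norm_le_of_forall_mem_frontier_norm_le isBounded_ball hdc ?_ ?_
    · intro w hw
      rw [frontier_ball 0 one_ne_zero] at hw
      rw [hmap w hw]
    · rwa [hclos]
  have hdc' : DiffContOnCl ℂ (fun z => (f z)⁻¹) (ball (0:ℂ) 1) := by
    refine ⟨DifferentiableOn.inv (hf.mono hsub')
      (fun z hz => hzero z (ball_subset_closedBall hz)), ?_⟩
    rw [hclos]
    exact hcont.inv₀ hzero
  have hlb : ∀ z ∈ closedBall (0:ℂ) 1, 1 ≤ ‖f z‖ := by
    intro z hz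
    have h1 : ‖(f z)⁻¹‖ ≤ 1 := by
      refine Complex.norm_le_of_forall_mem_frontier_norm_le isBounded_ball hdc' ?_ ?_
      · intro w hw
        rw [frontier_ball 0 one_ne_zero] at hw
        rw [norm_inv, hmap w hw]
        norm_num
      · rwa [hclos]
    rw [norm_inv] at h1
    have h2 : 0 < ‖f z‖ := norm_pos_iff.mpr (hzero z hz)
    rw [inv_le_one_iff₀] at h1
    rcases h1 with h1 | h1
    · linarith
    · exact h1
  have hmax : IsMaxOn (norm ∘ f) (ball (0:ℂ) 1) 0 := by
    intro z hz
    simp only [Function.comp_apply]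
    calc ‖f z‖ ≤ 1 := hub z (ball_subset_closedBall hz)
      _ ≤ ‖f 0‖ := hlb 0 (mem_closedBall_self (by norm_num))
  have hconst : EqOn f (Function.const ℂ (f 0)) (ball (0:ℂ) 1) :=
    Complex.eqOn_of_isPreconnected_of_isMaxOn_norm
      (convex_ball (0:ℂ) 1).isPreconnected isOpen_ball (hf.mono hsub')
      (mem_ball_self (by norm_num)) hmax
  have hconst' : EqOn f (Function.const ℂ (f 0)) (closedBall (0:ℂ) 1) :=
    hconst.of_subset_closure hcont continuousOn_const ball_subset_closedBall
      (by rw [hclos])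
  have habs : ‖f 0‖ = 1 := by
    have h1 := hub 0 (mem_closedBall_self (by norm_num))
    have h2 := hlb 0 (mem_closedBall_self (by norm_num))
    linarith
  refine ⟨Complex.arg (f 0), fun z hz => ?_⟩
  rw [hconst' hz]
  have := Complex.norm_mul_exp_arg_mul_I (f 0)
  rw [habs] at this
  simpa using this.symm

/-! ### Inductive step: divide out one Blaschke factor -/

lemma step (hε : 0 < ε) (hf : DifferentiableOn ℂ f (ball 0 (1+ε)))
    (hmap : ∀ z ∈ sphere (0:ℂ) 1, ‖f z‖ = 1)
    {α : ℂ} (hα : α ∈ closedBall (0:ℂ) 1) (hfα : f α = 0) :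
    ‖α‖ < 1 ∧
    ∃ f₁ : ℂ → ℂ,
      DifferentiableOn ℂ f₁ (ball 0 (1+ε)) ∧
      (∀ z ∈ sphere (0:ℂ) 1, ‖f₁ z‖ = 1) ∧
      (∀ z ∈ closedBall (0:ℂ) 1,
        f z = f₁ z * ((z - α) / (1 - (starRingEnd ℂ) α * z))) ∧
      M f₁ < M f := by
  have hsub : closedBall (0:ℂ) 1 ⊆ ball (0:ℂ) (1+ε) := cb_subset hε
  have hαball : α ∈ ball (0:ℂ) (1+ε) := hsub hα
  have hαlt : ‖α‖ < 1 := by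
    rcases lt_or_eq_of_le (abs_le_one_of_mem hα) with h | h
    · exact h
    · exfalso
      have : α ∈ sphere (0:ℂ) 1 := mem_sphere_zero_iff_norm.mpr h
      have := hmap α this
      rw [hfα] at this; simp at this
  refine ⟨hαlt, ?_⟩
  set d : ℂ → ℂ := dslope f α with hd_def
  set L : ℂ → ℂ := fun z => 1 - (starRingEnd ℂ) α * z with hL_def
  set f₁ : ℂ → ℂ := fun z => d z * L z with hf₁_def
  have hd : DifferentiableOn ℂ d (ball 0 (1+ε)) :=
    (differentiableOn_dslope (isOpen_ball.mem_nhds hαball)).mpr hf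
  have hfd : ∀ z, f z = (z - α) * d z := by
    intro z
    have h1 := sub_smul_dslope f α z
    rw [hfα, sub_zero] at h1
    rw [← h1, smul_eq_mul]
  have hL : ∀ z ∈ closedBall (0:ℂ) 1, L z ≠ 0 := by
    intro z hz h0
    have h1 : (starRingEnd ℂ) α * z = 1 := (sub_eq_zero.mp h0).symm
    have h2 : ‖(starRingEnd ℂ) α * z‖ < 1 := by
      rw [norm_mul, Complex.norm_conj]
      calc ‖α‖ * ‖z‖ ≤ ‖α‖ * 1 :=
            mul_le_mul_of_nonneg_left (abs_le_one_of_mem hz) (norm_nonneg α)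
        _ < 1 := by rw [mul_one]; exact hαlt
    rw [h1] at h2; simp at h2
  have hLdiff : Differentiable ℂ L :=
    (differentiable_const (1:ℂ)).sub (differentiable_id.const_mul _)
  have hf₁ : DifferentiableOn ℂ f₁ (ball 0 (1+ε)) := hd.mul hLdiff.differentiableOn
  have hmap₁ : ∀ z ∈ sphere (0:ℂ) 1, ‖f₁ z‖ = 1 := by
    intro z hz
    have hz1 : ‖z‖ = 1 := mem_sphere_zero_iff_norm.mp hz
    have hzα : ‖z - α‖ ≠ 0 := by
      intro h0
      rw [norm_eq_zero, sub_eq_zero] at h0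
      rw [h0] at hz1; rw [hz1] at hαlt; exact lt_irrefl 1 hαlt
    have h2 : ‖z - α‖ * ‖d z‖ = 1 := by
      rw [← norm_mul, ← hfd z]
      exact hmap z hz
    have h3 : ‖L z‖ = ‖z - α‖ := abs_one_sub_conj_mul hz1
    calc ‖f₁ z‖ = ‖d z‖ * ‖L z‖ := norm_mul _ _
      _ = ‖z - α‖ * ‖d z‖ := by rw [h3]; ring
      _ = 1 := h2
  have hfactor : ∀ z ∈ closedBall (0:ℂ) 1,
      f z = f₁ z * ((z - α) / (1 - (starRingEnd ℂ) α * z)) := by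
    intro z hz
    have hLz := hL z hz
    rw [hfd z]
    show (z - α) * d z = d z * L z * ((z - α) / L z)
    field_simp
  refine ⟨f₁, hf₁, hmap₁, hfactor, ?_⟩
  have hAd : AnalyticOnNhd ℂ d (ball 0 (1+ε)) := hd.analyticOnNhd isOpen_ball
  have hS : {z | z ∈ closedBall (0:ℂ) 1 ∧ f z = 0}.Finite := zeros_finite hε hf hmap
  have hS₁ : {z | z ∈ closedBall (0:ℂ) 1 ∧ f₁ z = 0}.Finite := zeros_finite hε hf₁ hmap₁
  have claim : ∀ z ∈ closedBall (0:ℂ) 1,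
      mOrd f z = (if z = α then 1 else 0) + mOrd f₁ z := by
    intro z hz
    have hzb : z ∈ ball (0:ℂ) (1+ε) := hsub hz
    have hdz : AnalyticAt ℂ d z := hAd z hzb
    have hd_ne : ¬ (∀ᶠ w in nhds z, d w = 0) := by
      intro h
      apply not_ev_zero hε hf hmap hzb
      filter_upwards [h] with w hw
      rw [hfd w, hw, mul_zero]
    have h_ne_top : analyticOrderAt d z ≠ ⊤ := by
      simp only [ne_eq, analyticOrderAt_eq_top]; exact hd_ne
    obtain ⟨k, hk⟩ := WithTop.ne_top_iff_exists.mp h_ne_top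
    have hk : analyticOrderAt d z = (k : ℕ∞) := hk.symm
    have hlin_an : AnalyticAt ℂ (fun w => w - α) z := analyticAt_id.sub analyticAt_const
    have hlin_ord : analyticOrderAt (fun w => w - α) z = ((if z = α then 1 else 0 : ℕ) : ℕ∞) := by
      split_ifs with h
      · subst h; exact order_linear_self hlin_an
      · exact order_eq_zero_of_ne hlin_an (sub_ne_zero.mpr h)
    have hLan : AnalyticAt ℂ L z :=
      analyticAt_const.sub (analyticAt_const.mul analyticAt_id)
    have hL_ord : analyticOrderAt L z = ((0:ℕ) : ℕ∞) := order_eq_zero_of_ne hLan (hL z hz)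
    have hfeq : f = fun w => (w - α) * d w := funext hfd
    have hford : mOrd f z = ((if z = α then 1 else 0) + k : ℕ) := by
      rw [hfeq]
      exact mOrd_eq (hlin_an.mul hdz) (order_mul hlin_an hdz (hlin_an.mul hdz) hlin_ord hk)
    have hf₁ord : mOrd f₁ z = (k + 0 : ℕ) :=
      mOrd_eq (hdz.mul hLan) (order_mul hdz hLan (hdz.mul hLan) hk hL_ord)
    rw [hford, hf₁ord]
    split_ifs <;> omega
  have hsub₁ : hS₁.toFinset ⊆ hS.toFinset := by
    intro z hzz
    rw [Set.Finite.mem_toFinset] at *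
    obtain ⟨hz1, hz2⟩ := hzz
    exact ⟨hz1, by rw [hfactor z hz1, hz2, zero_mul]⟩
  have hαmem : α ∈ hS.toFinset := hS.mem_toFinset.mpr ⟨hα, hfα⟩
  rw [M_eq hS₁, M_eq hS]
  calc hS₁.toFinset.sum (mOrd f₁) ≤ hS.toFinset.sum (mOrd f₁) :=
        Finset.sum_le_sum_of_subset hsub₁
    _ < hS.toFinset.sum (mOrd f) := by
        apply Finset.sum_lt_sum
        · intro i hi
          have hi' : i ∈ closedBall (0:ℂ) 1 := (hS.mem_toFinset.mp hi).1
          have hc := claim i hi'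
          split_ifs at hc <;> omega
        · refine ⟨α, hαmem, ?_⟩
          have hc := claim α hα
          split_ifs at hc with h
          · omega
          · exact absurd rfl h

/-! ### Main induction -/

lemma key (hε : 0 < ε) : ∀ n : ℕ, ∀ f : ℂ → ℂ,
    DifferentiableOn ℂ f (ball 0 (1+ε)) →
    (∀ z ∈ sphere (0:ℂ) 1, ‖f z‖ = 1) →
    M f = n →
    ∃ (θ : ℝ) (K : ℕ) (α : Fin K → ℂ), (∀ j, ‖α j‖ < 1) ∧
      ∀ z ∈ closedBall (0:ℂ) 1,
        f z = Complex.exp (θ * Complex.I) *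
          ∏ j, (z - α j) / (1 - (starRingEnd ℂ) (α j) * z) := by
  intro n
  induction n using Nat.strong_induction_on with
  | _ n ih =>
    intro f hf hmap hM
    by_cases hzero : ∀ z ∈ closedBall (0:ℂ) 1, f z ≠ 0
    · obtain ⟨θ, hθ⟩ := base_case hε hf hmap hzero
      refine ⟨θ, 0, fun _ => 0, fun j => j.elim0, fun z hz => ?_⟩
      rw [hθ z hz]
      simp
    · push_neg at hzero
      obtain ⟨α, hα, hfα⟩ := hzero
      obtain ⟨hαlt, f₁, hf₁, hmap₁, hfactor, hdec⟩ := step hε hf hmap hα hfα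
      rw [hM] at hdec
      obtain ⟨θ, K, β, hβ, hprod⟩ := ih (M f₁) hdec f₁ hf₁ hmap₁ rfl
      refine ⟨θ, K + 1, Fin.cons α β, ?_, ?_⟩
      · intro j
        refine Fin.cases ?_ ?_ j
        · exact hαlt
        · exact fun i => hβ i
      · intro z hz
        rw [hfactor z hz, hprod z hz, Fin.prod_univ_succ]
        simp only [Fin.cons_zero, Fin.cons_succ]
        ring

/-! ### Splitting off the zeros at the origin -/

lemma split_zero (K : ℕ) (α : Fin K → ℂ) (hβ : ∀ j, ‖α j‖ < 1) :
    ∃ (N K' : ℕ) (α' : Fin K' → ℂ),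
      (∀ j, ‖α' j‖ < 1 ∧ α' j ≠ 0) ∧
      ∀ z : ℂ, (∏ j, (z - α j) / (1 - (starRingEnd ℂ) (α j) * z)) =
        z ^ N * ∏ j, (z - α' j) / (1 - (starRingEnd ℂ) (α' j) * z) := by
  classical
  set s : Finset (Fin K) := Finset.univ.filter (fun j => α j = 0) with hs
  set t : Finset (Fin K) := Finset.univ.filter (fun j => ¬ α j = 0) with ht
  refine ⟨s.card, t.card, fun i => α (t.equivFin.symm i), ?_, ?_⟩
  · intro i
    dsimp only
    have hmem : ((t.equivFin.symm i : t) : Fin K) ∈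
        Finset.univ.filter (fun j => ¬ α j = 0) := (t.equivFin.symm i).2
    rw [Finset.mem_filter] at hmem
    exact ⟨hβ _, hmem.2⟩
  · intro z
    have hsplit := Finset.prod_filter_mul_prod_filter_not Finset.univ
      (fun j => α j = 0) (fun j => (z - α j) / (1 - (starRingEnd ℂ) (α j) * z))
    rw [← hsplit]
    congr 1
    · rw [← Finset.prod_const]
      apply Finset.prod_congr rfl
      intro j hj
      rw [Finset.mem_filter] at hj
      rw [hj.2]
      simp
    · rw [← Finset.prod_coe_sort t (fun j => (z - α j) / (1 - (starRingEnd ℂ) (α j) * z))]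
      exact (Equiv.prod_comp t.equivFin.symm
        (fun j : t => (z - α (j:Fin K)) / (1 - (starRingEnd ℂ) (α (j:Fin K)) * z))).symm

end BlaschkeProof

/-- If `g` is holomorphic on `(1+ε)𝔻` and maps the unit circle
into itself, then on the closed unit disc `g` is a finite Blaschke product:
`g(z) = e^{iθ} z^N ∏_j (z - α_j)/(1 - conj(α_j) z)` with `α_j ∈ 𝔻 \ {0}`. -/
theorem circle_to_circle_is_finite_Blaschke
    (ε : ℝ) (hε : 0 < ε) (g : ℂ → ℂ)
    (hg : DifferentiableOn ℂ g (Metric.ball 0 (1 + ε)))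
    (hmap : Set.MapsTo g (Metric.sphere 0 1) (Metric.sphere 0 1)) :
    ∃ (θ : ℝ) (N K : ℕ) (α : Fin K → ℂ),
      (∀ j, ‖α j‖ < 1 ∧ α j ≠ 0) ∧
      ∀ z ∈ Metric.closedBall (0:ℂ) 1,
        g z = Complex.exp (θ * Complex.I) * z ^ N *
          ∏ j, (z - α j) / (1 - (starRingEnd ℂ) (α j) * z) := by
  have hmap' : ∀ z ∈ sphere (0:ℂ) 1, ‖g z‖ = 1 := by
    intro z hz
    have := hmap hz
    exact mem_sphere_zero_iff_norm.mp this
  obtain ⟨θ, K, α, hα, hprod⟩ := BlaschkeProof.key hε (BlaschkeProof.M g) g hg hmap' rfl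
  obtain ⟨N, K', α', hα', hsplit⟩ := BlaschkeProof.split_zero K α hα
  refine ⟨θ, N, K', α', hα', fun z hz => ?_⟩
  rw [hprod z hz, hsplit z]
  ring
end

section
/- Let ε > 0 and let f be holomorphic on (1+ε)𝔻 such that f(closure of 𝔻) = closure of 𝔻 and f((1+ε)𝔻) ⊆ (1+ε)𝔻. Then f is a rotation: there exists β ∈ ℂ with |β| = 1 such that f(z) = β z for all z. -/
open Metric Complex Set

lemma mobius_den_ne (R : ℝ) (a ζ : ℂ) (hR : 0 < R) (ha : ‖a‖ < R) (hζ : ‖ζ‖ < R) :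
    ((R^2 : ℝ) : ℂ) - (starRingEnd ℂ) a * ζ ≠ 0 := by
  intro h
  rw [sub_eq_zero] at h
  have h1 : ‖(starRingEnd ℂ) a * ζ‖ < R^2 := by
    rw [norm_mul, Complex.norm_conj]
    nlinarith [norm_nonneg a, norm_nonneg ζ]
  rw [← h] at h1
  simp [Complex.norm_real, Real.norm_eq_abs, abs_of_pos (by positivity : (0:ℝ) < R^2)] at h1

lemma mobius_maps (R : ℝ) (a ζ : ℂ) (hR : 0 < R) (ha : ‖a‖ < R) (hζ : ‖ζ‖ < R) :
    ‖((R^2 : ℝ) : ℂ) * (ζ - a) / (((R^2 : ℝ) : ℂ) - (starRingEnd ℂ) a * ζ)‖ < R := by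
  have hden := mobius_den_ne R a ζ hR ha hζ
  have hdenpos : 0 < ‖((R^2 : ℝ) : ℂ) - (starRingEnd ℂ) a * ζ‖ :=
    norm_pos_iff.mpr hden
  rw [norm_div, norm_mul, div_lt_iff₀ hdenpos]
  have key : (‖((R^2 : ℝ) : ℂ) - (starRingEnd ℂ) a * ζ‖)^2 - (R * ‖ζ - a‖)^2
      = (R^2 - (‖a‖)^2) * (R^2 - (‖ζ‖)^2) := by
    rw [mul_pow, Complex.sq_norm, Complex.sq_norm, Complex.sq_norm, Complex.sq_norm]
    simp only [Complex.normSq_apply, Complex.sub_re, Complex.sub_im, Complex.mul_re,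
      Complex.mul_im, Complex.conj_re, Complex.conj_im, Complex.ofReal_re, Complex.ofReal_im]
    ring
  have h1 : 0 < (R^2 - (‖a‖)^2) * (R^2 - (‖ζ‖)^2) := by
    apply mul_pos <;> nlinarith [norm_nonneg a, norm_nonneg ζ]
  have h2 : R * ‖ζ - a‖ < ‖((R^2 : ℝ) : ℂ) - (starRingEnd ℂ) a * ζ‖ := by
    nlinarith [norm_nonneg (ζ - a), mul_nonneg hR.le (norm_nonneg (ζ - a)), hdenpos]
  rw [Complex.norm_real, Real.norm_eq_abs, abs_of_pos (by positivity : (0:ℝ) < R^2)]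
  calc R^2 * ‖ζ - a‖ = R * (R * ‖ζ - a‖) := by ring
    _ < R * (‖((R^2 : ℝ) : ℂ) - (starRingEnd ℂ) a * ζ‖) := by
        exact mul_lt_mul_of_pos_left h2 hR

/-- If `f` is holomorphic on `(1+ε)𝔻`, maps the closed unit disc
onto itself and maps `(1+ε)𝔻` into itself, then `f` is a rotation. -/
theorem onto_closed_disc_implies_rotation
    (ε : ℝ) (hε : 0 < ε) (f : ℂ → ℂ)
    (hf : DifferentiableOn ℂ f (Metric.ball 0 (1 + ε)))
    (hsurj : f '' Metric.closedBall (0:ℂ) 1 = Metric.closedBall (0:ℂ) 1)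
    (hmap : Set.MapsTo f (Metric.ball 0 (1 + ε)) (Metric.ball 0 (1 + ε))) :
    ∃ β : ℂ, ‖β‖ = 1 ∧ ∀ z ∈ Metric.ball (0:ℂ) (1 + ε), f z = β * z := by
  set R : ℝ := 1 + ε with hRdef
  have hR1 : 1 < R := by simp only [hRdef]; linarith
  have hR0 : 0 < R := by linarith
  have hsub : ∀ z ∈ Metric.closedBall (0:ℂ) 1, ‖f z‖ ≤ 1 := by
    intro z hz
    have h : f z ∈ Metric.closedBall (0:ℂ) 1 := hsurj ▸ mem_image_of_mem f hz
    exact mem_closedBall_zero_iff.mp h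
  have hpre : ∀ w ∈ Metric.closedBall (0:ℂ) 1, ∃ z, ‖z‖ ≤ 1 ∧ f z = w := by
    intro w hw
    rw [← hsurj] at hw
    obtain ⟨z, hz, hfz⟩ := hw
    exact ⟨z, by exact mem_closedBall_zero_iff.mp hz, hfz⟩
  have habs_fw : ∀ w ∈ Metric.ball (0:ℂ) R, ‖f w‖ < R := by
    intro w hw
    exact mem_ball_zero_iff.mp (hmap hw)
  -- Step 1 : f 0 = 0
  have hf0 : f 0 = 0 := by
    by_contra ha
    set a : ℂ := f 0 with ha_def
    set t : ℝ := ‖a‖ with ht_def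
    have ht0 : 0 < t := norm_pos_iff.mpr ha
    have htC : (t : ℂ) ≠ 0 := Complex.ofReal_ne_zero.mpr ht0.ne'
    have ht1 : t ≤ 1 := hsub 0 (by simp)
    have htR : ‖a‖ < R := lt_of_le_of_lt ht1 hR1
    set g : ℂ → ℂ := fun w => ((R^2 : ℝ) : ℂ) * (f w - a) / (((R^2 : ℝ) : ℂ) - (starRingEnd ℂ) a * f w)
      with hg_def
    have hg_diff : DifferentiableOn ℂ g (Metric.ball 0 R) := by
      apply DifferentiableOn.div
      · exact (differentiableOn_const _).mul (hf.sub (differentiableOn_const _))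
      · exact (differentiableOn_const _).sub ((differentiableOn_const _).mul hf)
      · intro w hw
        exact mobius_den_ne R a (f w) hR0 htR (habs_fw w hw)
    have hg0 : g 0 = 0 := by
      simp [hg_def, ← ha_def]
    have hg_maps : Set.MapsTo g (Metric.ball (0:ℂ) R) (Metric.ball (0:ℂ) R) := by
      intro w hw
      rw [mem_ball_zero_iff]
      exact mobius_maps R a (f w) hR0 htR (habs_fw w hw)
    set u : ℂ := -(a / (t : ℂ)) with hu_def
    have hu_abs : ‖u‖ = 1 := by
      rw [hu_def, norm_neg, norm_div, Complex.norm_real, Real.norm_eq_abs, abs_of_pos ht0, ← ht_def,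
        div_self ht0.ne']
    obtain ⟨u', hu'le, hu'⟩ := hpre u (by
      rw [mem_closedBall_zero_iff, hu_abs])
    have hle : ‖g u'‖ ≤ ‖u'‖ :=
      Complex.norm_le_norm_of_mapsTo_ball hg_diff (hg_maps.mono_right ball_subset_closedBall) hg0
        (show ‖u'‖ < R from lt_of_le_of_lt hu'le hR1)
    have hnum : ‖u - a‖ = 1 + t := by
      have h : u - a = -(((1 + t) / t : ℝ) : ℂ) * a := by
        rw [hu_def]
        push_cast
        field_simp
        ring
      rw [h, norm_mul, norm_neg, Complex.norm_real, Real.norm_eq_abs, ← ht_def,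
        abs_of_pos (by positivity)]
      try field_simp
    have hconj : (starRingEnd ℂ) a * a = ((t^2 : ℝ) : ℂ) := by
      rw [mul_comm, Complex.mul_conj, Complex.normSq_eq_norm_sq, ← ht_def]
      try push_cast
      try ring
    have hden_eq : ((R^2 : ℝ) : ℂ) - (starRingEnd ℂ) a * u = ((R^2 + t : ℝ) : ℂ) := by
      rw [hu_def, mul_neg, mul_div_assoc', hconj, sub_neg_eq_add]
      push_cast
      field_simp
    have hgu' : ‖g u'‖ = R^2 * (1 + t) / (R^2 + t) := by
      have h : g u' = ((R^2 : ℝ) : ℂ) * (u - a) / ((R^2 + t : ℝ) : ℂ) := by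
        rw [hg_def]
        simp only []
        rw [hu', hden_eq]
      rw [h, norm_div, norm_mul, Complex.norm_real, Complex.norm_real, Real.norm_eq_abs, Real.norm_eq_abs, hnum,
        abs_of_pos (by positivity : (0:ℝ) < R^2), abs_of_pos (by positivity : (0:ℝ) < R^2 + t)]
    rw [hgu'] at hle
    have hle1 : R^2 * (1 + t) / (R^2 + t) ≤ 1 := le_trans hle hu'le
    rw [div_le_one (by positivity)] at hle1
    nlinarith [mul_pos ht0 (show (0:ℝ) < R^2 - 1 by nlinarith)]
  -- Step 2 : find an interior point of equality for the Schwarz lemma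
  obtain ⟨z₀, hz₀le, hz₀⟩ := hpre 1 (by simp)
  have habs_le : ‖f z₀‖ ≤ ‖z₀‖ :=
    Complex.norm_le_norm_of_mapsTo_ball hf (hmap.mono_right ball_subset_closedBall) hf0 (lt_of_le_of_lt hz₀le hR1)
  have h1le : (1:ℝ) ≤ ‖z₀‖ := by
    rw [hz₀] at habs_le
    simpa using habs_le
  have hz₀abs : ‖z₀‖ = 1 := le_antisymm hz₀le h1le
  have hz₀ne : z₀ ≠ 0 := by
    intro h
    rw [h] at hz₀abs
    simp at hz₀abs
  have hz₀ball : z₀ ∈ Metric.ball (0:ℂ) R := by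
    rw [mem_ball_zero_iff, hz₀abs]
    exact hR1
  have h_maps' : Set.MapsTo f (Metric.ball (0:ℂ) R) (Metric.ball (f 0) R) := by
    rwa [hf0]
  have hslope : dslope f 0 z₀ = z₀⁻¹ := by
    rw [dslope_of_ne _ hz₀ne, slope_def_field, hz₀, hf0]
    simp
  have h_eq : ‖dslope f 0 z₀‖ = R / R := by
    rw [div_self hR0.ne', hslope, norm_inv, hz₀abs, inv_one]
  have heqOn := Complex.affine_of_mapsTo_ball_of_norm_dslope_eq_div hf (h_maps'.mono_right ball_subset_closedBall) hz₀ball h_eq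
  refine ⟨z₀⁻¹, ?_, ?_⟩
  · rw [norm_inv, hz₀abs, inv_one]
  · intro z hz
    have h := heqOn hz
    simp only [hf0, hslope, smul_eq_mul, sub_zero, zero_add] at h
    rw [h, mul_comm]
end

section
/- Let 0 < r₁ < r₂ < 1 and let B₁, B₂ be finite Blaschke products such that r₁^{n−N₁} e^{iθ₁} z^{N₁} ∏_{i=1}^{K₁} ((z/r₁ − α_i)/(1 − conj(α_i) z/r₁)) = r₂^{n−N₂} e^{iθ₂} z^{N₂} ∏_{j=1}^{K₂} ((z/r₂ − β_j)/(1 − conj(β_j) z/r₂)) for all |z| < r₁, where 0 < |α_i|, |β_j| < 1. Then this is impossible unless K₁ = K₂ = 0; consequently B₁(z) = e^{iθ₁} z^{N₁} and B₂(z) = e^{iθ₂} z^{N₂} with N₁ = N₂ = n and e^{iθ₁} = e^{iθ₂}. -/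
open Complex

lemma cleared (r₁ r₂ : ℝ) (hr₁ : 0 < r₁) (hr₁₂ : r₁ < r₂)
    (n N₁ N₂ K₁ K₂ : ℕ) (θ₁ θ₂ : ℝ)
    (α : Fin K₁ → ℂ) (β : Fin K₂ → ℂ)
    (hα : ∀ i, 0 < ‖α i‖ ∧ ‖α i‖ < 1)
    (hβ : ∀ j, 0 < ‖β j‖ ∧ ‖β j‖ < 1)
    (heq : ∀ z : ℂ, ‖z‖ < r₁ →
      (r₁ : ℂ) ^ n * Complex.exp (θ₁ * Complex.I) * (z / r₁) ^ N₁ *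
          ∏ i, (z / r₁ - α i) / (1 - (starRingEnd ℂ) (α i) * (z / r₁))
        = (r₂ : ℂ) ^ n * Complex.exp (θ₂ * Complex.I) * (z / r₂) ^ N₂ *
          ∏ j, (z / r₂ - β j) / (1 - (starRingEnd ℂ) (β j) * (z / r₂)))
    (z : ℂ) (hz : ‖z‖ < r₁) :
    ((r₁:ℂ)^n * Complex.exp (θ₁*Complex.I) / (r₁:ℂ)^N₁ * ∏ j, (-((starRingEnd ℂ) (β j)))) *
      (z ^ N₁ * (∏ i, (z - (r₁:ℂ) * α i)) * (∏ j, (z - (r₂:ℂ) / (starRingEnd ℂ) (β j))))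
    = ((r₂:ℂ)^n * Complex.exp (θ₂*Complex.I) / (r₂:ℂ)^N₂ * ∏ i, (-((starRingEnd ℂ) (α i)))) *
      (z ^ N₂ * (∏ j, (z - (r₂:ℂ) * β j)) * (∏ i, (z - (r₁:ℂ) / (starRingEnd ℂ) (α i)))) := by
  have hr₂0 : (0:ℝ) < r₂ := lt_trans hr₁ hr₁₂
  have hr₁c : (r₁:ℂ) ≠ 0 := by exact_mod_cast hr₁.ne'
  have hr₂c : (r₂:ℂ) ≠ 0 := by exact_mod_cast hr₂0.ne'
  have hαne : ∀ i, (starRingEnd ℂ) (α i) ≠ 0 := by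
    intro i
    simp only [ne_eq, map_eq_zero]
    intro h
    have := (hα i).1
    rw [h] at this; simp at this
  have hβne : ∀ j, (starRingEnd ℂ) (β j) ≠ 0 := by
    intro j
    simp only [ne_eq, map_eq_zero]
    intro h
    have := (hβ j).1
    rw [h] at this; simp at this
  have hd₁ : ∀ i, (r₁:ℂ) - (starRingEnd ℂ) (α i) * z ≠ 0 := by
    intro i h
    rw [sub_eq_zero] at h
    have := congrArg (fun w : ℂ => ‖w‖) h
    simp only [norm_mul, Complex.norm_conj, Complex.norm_real, Real.norm_eq_abs, abs_of_pos hr₁] at this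
    nlinarith [(hα i).1, (hα i).2, norm_nonneg z]
  have hd₂ : ∀ j, (r₂:ℂ) - (starRingEnd ℂ) (β j) * z ≠ 0 := by
    intro j h
    rw [sub_eq_zero] at h
    have := congrArg (fun w : ℂ => ‖w‖) h
    simp only [norm_mul, Complex.norm_conj, Complex.norm_real, Real.norm_eq_abs, abs_of_pos hr₂0] at this
    nlinarith [(hβ j).1, (hβ j).2, norm_nonneg z]
  have hd₁' : ∀ i, (1:ℂ) - (starRingEnd ℂ) (α i) * (z / r₁) ≠ 0 := by
    intro i h
    apply hd₁ i
    have := congrArg (fun w => (r₁:ℂ) * w) h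
    simp only [mul_zero] at this
    rw [← this]; field_simp
  have hd₂' : ∀ j, (1:ℂ) - (starRingEnd ℂ) (β j) * (z / r₂) ≠ 0 := by
    intro j h
    apply hd₂ j
    have := congrArg (fun w => (r₂:ℂ) * w) h
    simp only [mul_zero] at this
    rw [← this]; field_simp
  have h := heq z hz
  rw [show (∏ i, (z / r₁ - α i) / (1 - (starRingEnd ℂ) (α i) * (z / r₁)))
      = ∏ i, (z - (r₁:ℂ) * α i) / ((r₁:ℂ) - (starRingEnd ℂ) (α i) * z) from
    Finset.prod_congr rfl fun i _ => by
      rw [div_eq_div_iff (hd₁' i) (hd₁ i)]; field_simp] at h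
  rw [show (∏ j, (z / r₂ - β j) / (1 - (starRingEnd ℂ) (β j) * (z / r₂)))
      = ∏ j, (z - (r₂:ℂ) * β j) / ((r₂:ℂ) - (starRingEnd ℂ) (β j) * z) from
    Finset.prod_congr rfl fun j _ => by
      rw [div_eq_div_iff (hd₂' j) (hd₂ j)]; field_simp] at h
  rw [Finset.prod_div_distrib, Finset.prod_div_distrib, div_pow, div_pow] at h
  have hQα : (∏ i, ((r₁:ℂ) - (starRingEnd ℂ) (α i) * z)) ≠ 0 :=
    Finset.prod_ne_zero_iff.mpr fun i _ => hd₁ i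
  have hQβ : (∏ j, ((r₂:ℂ) - (starRingEnd ℂ) (β j) * z)) ≠ 0 :=
    Finset.prod_ne_zero_iff.mpr fun j _ => hd₂ j
  have hbprod : (∏ j, (-((starRingEnd ℂ) (β j)))) * (∏ j, (z - (r₂:ℂ) / (starRingEnd ℂ) (β j)))
      = ∏ j, ((r₂:ℂ) - (starRingEnd ℂ) (β j) * z) := by
    rw [← Finset.prod_mul_distrib]
    exact Finset.prod_congr rfl fun j _ => by field_simp [hβne j]; ring
  have haprod : (∏ i, (-((starRingEnd ℂ) (α i)))) * (∏ i, (z - (r₁:ℂ) / (starRingEnd ℂ) (α i)))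
      = ∏ i, ((r₁:ℂ) - (starRingEnd ℂ) (α i) * z) := by
    rw [← Finset.prod_mul_distrib]
    exact Finset.prod_congr rfl fun i _ => by field_simp [hαne i]; ring
  field_simp [hQα, hQβ] at h
  rw [show ((r₁:ℂ)^n * Complex.exp (θ₁*Complex.I) / (r₁:ℂ)^N₁ * ∏ j, (-((starRingEnd ℂ) (β j)))) *
      (z ^ N₁ * (∏ i, (z - (r₁:ℂ) * α i)) * (∏ j, (z - (r₂:ℂ) / (starRingEnd ℂ) (β j))))
    = (r₁:ℂ)^n * Complex.exp (θ₁*Complex.I) / (r₁:ℂ)^N₁ *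
      (z ^ N₁ * (∏ i, (z - (r₁:ℂ) * α i))) *
      ((∏ j, (-((starRingEnd ℂ) (β j)))) * (∏ j, (z - (r₂:ℂ) / (starRingEnd ℂ) (β j)))) from by ring,
    hbprod,
    show ((r₂:ℂ)^n * Complex.exp (θ₂*Complex.I) / (r₂:ℂ)^N₂ * ∏ i, (-((starRingEnd ℂ) (α i)))) *
      (z ^ N₂ * (∏ j, (z - (r₂:ℂ) * β j)) * (∏ i, (z - (r₁:ℂ) / (starRingEnd ℂ) (α i))))
    = (r₂:ℂ)^n * Complex.exp (θ₂*Complex.I) / (r₂:ℂ)^N₂ *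
      (z ^ N₂ * (∏ j, (z - (r₂:ℂ) * β j))) *
      ((∏ i, (-((starRingEnd ℂ) (α i)))) * (∏ i, (z - (r₁:ℂ) / (starRingEnd ℂ) (α i)))) from by ring,
    haprod]
  field_simp
  have hQα' : (∏ i, ((r₁:ℂ) - z * (starRingEnd ℂ) (α i))) ≠ 0 :=
    Finset.prod_ne_zero_iff.mpr fun i _ => by rw [mul_comm]; exact hd₁ i
  have hQβ' : (∏ j, ((r₂:ℂ) - z * (starRingEnd ℂ) (β j))) ≠ 0 :=
    Finset.prod_ne_zero_iff.mpr fun j _ => by rw [mul_comm]; exact hd₂ j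
  rw [div_eq_div_iff hQα' hQβ'] at h
  linear_combination h

open Complex

open Polynomial in
lemma roots_aux (e : ℂ) (he : e ≠ 0) (N : ℕ) (s : Multiset ℂ) :
    (C e * (X ^ N * (s.map fun c => X - C c).prod)).roots
      = N • ({0} : Multiset ℂ) + s := by
  have hm : ((s.map fun c => X - C c).prod).Monic :=
    monic_multiset_prod_of_monic _ _ fun c _ => monic_X_sub_C c
  rw [Polynomial.roots_C_mul _ he,
    Polynomial.roots_mul (mul_ne_zero (pow_ne_zero _ Polynomial.X_ne_zero) hm.ne_zero),
    Polynomial.roots_X_pow, Polynomial.roots_multiset_prod_X_sub_C]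

open Polynomial in
lemma eval_aux (e : ℂ) (N : ℕ) {ι κ : Type*} [Fintype ι] [Fintype κ]
    (f : ι → ℂ) (g : κ → ℂ) (z : ℂ) :
    Polynomial.eval z (C e * (X ^ N *
      ((Multiset.map f Finset.univ.val + Multiset.map g Finset.univ.val).map
        fun c => X - C c).prod))
    = e * (z ^ N * (∏ i, (z - f i)) * (∏ j, (z - g j))) := by
  simp only [eval_mul, eval_C, eval_pow, eval_X, Polynomial.eval_multiset_prod,
    Multiset.map_add, Multiset.map_map, Function.comp, eval_sub, eval_X, eval_C,
    Multiset.prod_add, Finset.prod_eq_multiset_prod]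
  ring

lemma inv_aux {ι κ ι' κ' : Type*} [Fintype ι] [Fintype κ] [Fintype ι'] [Fintype κ']
    (a : ι → ℂ) (b : κ → ℂ) (a' : ι' → ℂ) (b' : κ' → ℂ)
    (hM : Multiset.map a Finset.univ.val + Multiset.map b Finset.univ.val
        = Multiset.map a' Finset.univ.val + Multiset.map b' Finset.univ.val)
    (f : ℂ → ℝ) :
    (∏ i, f (a i)) * (∏ j, f (b j)) = (∏ i, f (a' i)) * (∏ j, f (b' j)) := by
  have := congrArg (fun s => (Multiset.map f s).prod) hM
  simpa only [Multiset.map_add, Multiset.map_map, Function.comp, Multiset.prod_add,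
    ← Finset.prod_eq_multiset_prod] using this



open Metric Complex Set

/-- If two scaled finite Blaschke products
`r₁ⁿ e^{iθ₁} (z/r₁)^{N₁} ∏ᵢ (z/r₁ - αᵢ)/(1 - conj(αᵢ) z/r₁)` and
`r₂ⁿ e^{iθ₂} (z/r₂)^{N₂} ∏ⱼ (z/r₂ - βⱼ)/(1 - conj(βⱼ) z/r₂)`
agree on `|z| < r₁` (with `0 < r₁ < r₂ < 1` and all `0 < |αᵢ|, |βⱼ| < 1`), then
necessarily `K₁ = K₂ = 0`, `N₁ = N₂ = n`, and `e^{iθ₁} = e^{iθ₂}`. -/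
theorem scaled_blaschke_rigidity
    (r₁ r₂ : ℝ) (hr₁ : 0 < r₁) (hr₁₂ : r₁ < r₂) (hr₂ : r₂ < 1)
    (n N₁ N₂ K₁ K₂ : ℕ) (θ₁ θ₂ : ℝ)
    (α : Fin K₁ → ℂ) (β : Fin K₂ → ℂ)
    (hα : ∀ i, 0 < ‖α i‖ ∧ ‖α i‖ < 1)
    (hβ : ∀ j, 0 < ‖β j‖ ∧ ‖β j‖ < 1)
    (heq : ∀ z : ℂ, ‖z‖ < r₁ →
      (r₁ : ℂ) ^ n * Complex.exp (θ₁ * Complex.I) * (z / r₁) ^ N₁ *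
          ∏ i, (z / r₁ - α i) / (1 - (starRingEnd ℂ) (α i) * (z / r₁))
        = (r₂ : ℂ) ^ n * Complex.exp (θ₂ * Complex.I) * (z / r₂) ^ N₂ *
          ∏ j, (z / r₂ - β j) / (1 - (starRingEnd ℂ) (β j) * (z / r₂))) :
    K₁ = 0 ∧ K₂ = 0 ∧ N₁ = n ∧ N₂ = n ∧
      Complex.exp (θ₁ * Complex.I) = Complex.exp (θ₂ * Complex.I) := by
  have hr₂0 : (0:ℝ) < r₂ := hr₁.trans hr₁₂
  have hr₁c : (r₁:ℂ) ≠ 0 := by exact_mod_cast hr₁.ne'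
  have hr₂c : (r₂:ℂ) ≠ 0 := by exact_mod_cast hr₂0.ne'
  have hαne : ∀ i, (starRingEnd ℂ) (α i) ≠ 0 := by
    intro i
    simp only [ne_eq, map_eq_zero]
    intro h
    have := (hα i).1
    rw [h] at this; simp at this
  have hβne : ∀ j, (starRingEnd ℂ) (β j) ≠ 0 := by
    intro j
    simp only [ne_eq, map_eq_zero]
    intro h
    have := (hβ j).1
    rw [h] at this; simp at this
  have he₁ : (r₁:ℂ)^n * Complex.exp (θ₁*Complex.I) / (r₁:ℂ)^N₁ *
      (∏ j, (-((starRingEnd ℂ) (β j)))) ≠ 0 :=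
    mul_ne_zero (div_ne_zero (mul_ne_zero (pow_ne_zero _ hr₁c) (Complex.exp_ne_zero _))
      (pow_ne_zero _ hr₁c))
      (Finset.prod_ne_zero_iff.mpr fun j _ => neg_ne_zero.mpr (hβne j))
  have he₂ : (r₂:ℂ)^n * Complex.exp (θ₂*Complex.I) / (r₂:ℂ)^N₂ *
      (∏ i, (-((starRingEnd ℂ) (α i)))) ≠ 0 :=
    mul_ne_zero (div_ne_zero (mul_ne_zero (pow_ne_zero _ hr₂c) (Complex.exp_ne_zero _))
      (pow_ne_zero _ hr₂c))
      (Finset.prod_ne_zero_iff.mpr fun i _ => neg_ne_zero.mpr (hαne i))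
  -- polynomial identity
  have hpoly :
      Polynomial.C ((r₁:ℂ)^n * Complex.exp (θ₁*Complex.I) / (r₁:ℂ)^N₁ *
        (∏ j, (-((starRingEnd ℂ) (β j))))) *
        (Polynomial.X ^ N₁ *
          ((Multiset.map (fun i => (r₁:ℂ) * α i) Finset.univ.val +
            Multiset.map (fun j => (r₂:ℂ) / (starRingEnd ℂ) (β j)) Finset.univ.val).map
              fun c => Polynomial.X - Polynomial.C c).prod)
      = Polynomial.C ((r₂:ℂ)^n * Complex.exp (θ₂*Complex.I) / (r₂:ℂ)^N₂ *
        (∏ i, (-((starRingEnd ℂ) (α i))))) *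
        (Polynomial.X ^ N₂ *
          ((Multiset.map (fun j => (r₂:ℂ) * β j) Finset.univ.val +
            Multiset.map (fun i => (r₁:ℂ) / (starRingEnd ℂ) (α i)) Finset.univ.val).map
              fun c => Polynomial.X - Polynomial.C c).prod) := by
    rw [← sub_eq_zero]
    apply Polynomial.eq_zero_of_infinite_isRoot
    apply Set.Infinite.mono ?_
      ((Set.Ioo_infinite (by linarith : (0:ℝ) < r₁)).image Complex.ofReal_injective.injOn)
    rintro z ⟨x, hx, rfl⟩
    have hxr : ‖(x:ℂ)‖ < r₁ := by
      rw [Complex.norm_real, Real.norm_eq_abs, abs_of_pos hx.1]; exact hx.2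
    have hk := cleared r₁ r₂ hr₁ hr₁₂ n N₁ N₂ K₁ K₂ θ₁ θ₂ α β hα hβ heq x hxr
    simp only [Set.mem_setOf_eq, Polynomial.IsRoot, Polynomial.eval_sub, eval_aux, sub_eq_zero]
    exact hk
  have hroots := congrArg Polynomial.roots hpoly
  rw [roots_aux _ he₁, roots_aux _ he₂] at hroots
  -- N₁ = N₂
  have h0A : (0:ℂ) ∉ Multiset.map (fun i => (r₁:ℂ) * α i) Finset.univ.val := by
    intro h
    obtain ⟨i, -, h⟩ := Multiset.mem_map.mp h
    rcases mul_eq_zero.mp h with h' | h'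
    · exact hr₁c h'
    · have := (hα i).1; rw [h'] at this; simp at this
  have h0B' : (0:ℂ) ∉ Multiset.map (fun j => (r₂:ℂ) / (starRingEnd ℂ) (β j)) Finset.univ.val := by
    intro h
    obtain ⟨j, -, h⟩ := Multiset.mem_map.mp h
    exact hr₂c (by simpa [div_eq_zero_iff, hβne j] using h)
  have h0B : (0:ℂ) ∉ Multiset.map (fun j => (r₂:ℂ) * β j) Finset.univ.val := by
    intro h
    obtain ⟨j, -, h⟩ := Multiset.mem_map.mp h
    rcases mul_eq_zero.mp h with h' | h'
    · exact hr₂c h'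
    · have := (hβ j).1; rw [h'] at this; simp at this
  have h0A' : (0:ℂ) ∉ Multiset.map (fun i => (r₁:ℂ) / (starRingEnd ℂ) (α i)) Finset.univ.val := by
    intro h
    obtain ⟨i, -, h⟩ := Multiset.mem_map.mp h
    exact hr₁c (by simpa [div_eq_zero_iff, hαne i] using h)
  have hN : N₁ = N₂ := by
    have hcnt := congrArg (Multiset.count 0) hroots
    simp only [Multiset.count_add, Multiset.count_nsmul, Multiset.count_singleton_self,
      Multiset.count_eq_zero_of_notMem h0A, Multiset.count_eq_zero_of_notMem h0B',
      Multiset.count_eq_zero_of_notMem h0B, Multiset.count_eq_zero_of_notMem h0A'] at hcnt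
    omega
  have hM : Multiset.map (fun i => (r₁:ℂ) * α i) Finset.univ.val +
      Multiset.map (fun j => (r₂:ℂ) / (starRingEnd ℂ) (β j)) Finset.univ.val
      = Multiset.map (fun j => (r₂:ℂ) * β j) Finset.univ.val +
      Multiset.map (fun i => (r₁:ℂ) / (starRingEnd ℂ) (α i)) Finset.univ.val := by
    rw [hN] at hroots
    exact add_left_cancel hroots
  -- invariants
  have hinv := inv_aux _ _ _ _ hM
  have hA : (0:ℝ) < ∏ i, ‖α i‖ := Finset.prod_pos fun i _ => (hα i).1
  have hB : (0:ℝ) < ∏ j, ‖β j‖ := Finset.prod_pos fun j _ => (hβ j).1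
  have habsa : ∀ i, ‖(r₁:ℂ) * α i‖ = r₁ * ‖α i‖ := fun i => by
    rw [norm_mul, Complex.norm_real, Real.norm_eq_abs, abs_of_pos hr₁]
  have habsb : ∀ j, ‖(r₂:ℂ) * β j‖ = r₂ * ‖β j‖ := fun j => by
    rw [norm_mul, Complex.norm_real, Real.norm_eq_abs, abs_of_pos hr₂0]
  have habsb' : ∀ j, ‖(r₂:ℂ) / (starRingEnd ℂ) (β j)‖ = r₂ / ‖β j‖ :=
    fun j => by rw [norm_div, Complex.norm_real, Real.norm_eq_abs, abs_of_pos hr₂0, Complex.norm_conj]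
  have habsa' : ∀ i, ‖(r₁:ℂ) / (starRingEnd ℂ) (α i)‖ = r₁ / ‖α i‖ :=
    fun i => by rw [norm_div, Complex.norm_real, Real.norm_eq_abs, abs_of_pos hr₁, Complex.norm_conj]
  -- invariant 1 : products of absolute values
  have I1 : (r₁ ^ K₁ * ∏ i, ‖α i‖) * (r₂ ^ K₂ / ∏ j, ‖β j‖)
      = (r₂ ^ K₂ * ∏ j, ‖β j‖) * (r₁ ^ K₁ / ∏ i, ‖α i‖) := by
    have := hinv (fun w => ‖w‖)
    simp only [habsa, habsb, habsa', habsb'] at this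
    simpa [Finset.prod_mul_distrib, Finset.prod_div_distrib, Finset.prod_const,
      Finset.card_univ] using this
  have hAB : (∏ i, ‖α i‖) = ∏ j, ‖β j‖ := by
    have h1 : (0:ℝ) < r₁ ^ K₁ := pow_pos hr₁ _
    have h2 : (0:ℝ) < r₂ ^ K₂ := pow_pos hr₂0 _
    field_simp at I1
    have hsq : ((∏ i, ‖α i‖) ^ 2 - (∏ j, ‖β j‖) ^ 2) *
        (r₁ ^ K₁ * r₂ ^ K₂) = 0 := by linear_combination (r₁ ^ K₁ * r₂ ^ K₂) * I1
    have h3 := mul_eq_zero.mp hsq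
    rcases h3 with h3 | h3
    · have h4 := mul_eq_zero.mp (by linear_combination h3 :
        ((∏ i, ‖α i‖) - ∏ j, ‖β j‖) *
        ((∏ i, ‖α i‖) + ∏ j, ‖β j‖) = 0)
      rcases h4 with h4 | h4
      · linarith
      · linarith
    · nlinarith
  -- invariant 2 : K₂ = 0
  have hK₂ : K₂ = 0 := by
    by_contra hK
    haveI : Nonempty (Fin K₂) := ⟨⟨0, Nat.pos_of_ne_zero hK⟩⟩
    have I2 := hinv (fun w => min (‖w‖) r₁)
    simp only [habsa, habsb, habsa', habsb'] at I2
    rw [show (∏ i, min (r₁ * ‖α i‖) r₁) = ∏ i, r₁ * ‖α i‖ from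
        Finset.prod_congr rfl fun i _ => min_eq_left (by nlinarith [(hα i).1, (hα i).2]),
      show (∏ j, min (r₂ / ‖β j‖) r₁) = ∏ _j : Fin K₂, r₁ from
        Finset.prod_congr rfl fun j _ => min_eq_right (by
          rw [le_div_iff₀ (hβ j).1]; nlinarith [(hβ j).1, (hβ j).2]),
      show (∏ i, min (r₁ / ‖α i‖) r₁) = ∏ _i : Fin K₁, r₁ from
        Finset.prod_congr rfl fun i _ => min_eq_right (by
          rw [le_div_iff₀ (hα i).1]; nlinarith [(hα i).1, (hα i).2])] at I2
    have hlt : ∏ j, (r₁ * ‖β j‖) < ∏ j, min (r₂ * ‖β j‖) r₁ :=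
      Finset.prod_lt_prod_of_nonempty (fun j _ => mul_pos hr₁ (hβ j).1)
        (fun j _ => lt_min (by nlinarith [(hβ j).1]) (by nlinarith [(hβ j).1, (hβ j).2]))
        Finset.univ_nonempty
    simp only [Finset.prod_mul_distrib, Finset.prod_const, Finset.card_univ,
      Fintype.card_fin] at I2 hlt
    rw [hAB] at I2
    nlinarith [pow_pos hr₁ K₁, pow_pos hr₁ K₂, hB]
  subst hK₂
  simp only [Finset.univ_eq_empty, Finset.prod_empty] at hAB
  have hK₁ : K₁ = 0 := by
    by_contra hK
    haveI : Nonempty (Fin K₁) := ⟨⟨0, Nat.pos_of_ne_zero hK⟩⟩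
    have hlt : ∏ i, ‖α i‖ < ∏ _i : Fin K₁, (1:ℝ) :=
      Finset.prod_lt_prod_of_nonempty (fun i _ => (hα i).1) (fun i _ => (hα i).2)
        Finset.univ_nonempty
    simp only [Finset.prod_const_one] at hlt
    rw [hAB] at hlt
    exact absurd hlt (lt_irrefl _)
  subst hK₁
  subst hN
  -- evaluate at z₀ = r₁ / 2
  have hz₀ : ‖((r₁/2 : ℝ) : ℂ)‖ < r₁ := by
    rw [Complex.norm_real, Real.norm_eq_abs, abs_of_pos (by linarith)]; linarith
  have h := heq _ hz₀
  simp only [Finset.univ_eq_empty, Finset.prod_empty, mul_one] at h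
  have habs := congrArg (fun w : ℂ => ‖w‖) h
  simp only [norm_mul, norm_pow, norm_div, Complex.norm_real, Real.norm_eq_abs, Complex.norm_exp_ofReal_mul_I,
    abs_of_pos hr₁, abs_of_pos hr₂0, abs_of_pos (by linarith : (0:ℝ) < r₁/2), mul_one] at habs
  have hcl : r₁^n * r₂^N₁ = r₂^n * r₁^N₁ := by
    have h2 := habs
    rw [div_div, div_div, div_pow, div_pow, mul_div_assoc', mul_div_assoc',
      div_eq_div_iff (by positivity) (by positivity), mul_pow, mul_pow] at h2
    have h3 : (r₁^n * r₂^N₁) * (r₁^N₁ * 2^N₁) = (r₂^n * r₁^N₁) * (r₁^N₁ * 2^N₁) := by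
      ring_nf at h2 ⊢; linarith [h2]
    exact mul_right_cancel₀ (by positivity) h3
  have hn : n = N₁ := by
    have hx0 : (0:ℝ) < r₁/r₂ := by positivity
    have hx1 : r₁/r₂ < 1 := (div_lt_one hr₂0).mpr hr₁₂
    have hp : (r₁/r₂)^n = (r₁/r₂)^N₁ := by
      rw [div_pow, div_pow, div_eq_div_iff (by positivity) (by positivity)]
      linear_combination hcl
    exact (pow_right_strictAnti₀ hx0 hx1).injective hp
  subst hn
  have hz₀ne : ((r₁/2 : ℝ) : ℂ) ≠ 0 := by
    simp only [ne_eq, Complex.ofReal_eq_zero]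
    intro hcon; linarith
  rw [show (r₁:ℂ)^n * Complex.exp (θ₁*Complex.I) * (((r₁/2 : ℝ):ℂ)/(r₁:ℂ))^n
      = Complex.exp (θ₁*Complex.I) * ((r₁:ℂ) * (((r₁/2 : ℝ):ℂ)/(r₁:ℂ)))^n by
        rw [mul_pow]; ring,
    show (r₂:ℂ)^n * Complex.exp (θ₂*Complex.I) * (((r₁/2 : ℝ):ℂ)/(r₂:ℂ))^n
      = Complex.exp (θ₂*Complex.I) * ((r₂:ℂ) * (((r₁/2 : ℝ):ℂ)/(r₂:ℂ)))^n by
        rw [mul_pow]; ring,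
    mul_div_cancel₀ _ hr₁c, mul_div_cancel₀ _ hr₂c] at h
  exact ⟨rfl, rfl, rfl, rfl, mul_right_cancel₀ (pow_ne_zero _ hz₀ne) h⟩
end

section
/- Let 0 < r < 1 and δ_k, δ_{k+1}, δ_{k+2} ∈ 𝕋 be unimodular complex numbers such that sup_{|z|=r} |δ_k + δ_{k+1} z + δ_{k+2} z²| = 1 + r + r². Then δ_k δ_{k+2} = δ_{k+1}², i.e., arg δ_k − 2 arg δ_{k+1} + arg δ_{k+2} ≡ 0 (mod 2π). -/
open Metric Complex Set

/-- If unimodular `δₖ, δₖ₊₁, δₖ₊₂` satisfy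
`sup_{|z|=r} |δₖ + δₖ₊₁ z + δₖ₊₂ z²| = 1 + r + r²` for some `0 < r < 1`,
then `δₖ δₖ₊₂ = δₖ₊₁²`. -/
theorem extremal_quadratic_forces_aligned_args
    (r : ℝ) (hr : 0 < r) (hr1 : r < 1)
    (δk δk1 δk2 : ℂ)
    (hδk : ‖δk‖ = 1) (hδk1 : ‖δk1‖ = 1)
    (hδk2 : ‖δk2‖ = 1)
    (hsup : (⨆ z : Metric.sphere (0:ℂ) r,
        ‖δk + δk1 * (z : ℂ) + δk2 * (z : ℂ) ^ 2‖) = 1 + r + r ^ 2) :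
    δk * δk2 = δk1 ^ 2 := by
  set f : ℂ → ℝ := fun z => ‖δk + δk1 * z + δk2 * z ^ 2‖ with hf
  have hne : (Metric.sphere (0:ℂ) r).Nonempty := NormedSpace.sphere_nonempty.mpr hr.le
  have hc : ContinuousOn f (Metric.sphere (0:ℂ) r) :=
    (continuous_norm.comp (by continuity)).continuousOn
  obtain ⟨z₀, hz₀mem, hmax⟩ := (isCompact_sphere (0:ℂ) r).exists_isMaxOn hne hc
  have hz₀r : ‖z₀‖ = r := by
    simpa using mem_sphere_iff_norm.mp hz₀mem
  have hz₀ne : z₀ ≠ 0 := by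
    intro h; rw [h, norm_zero] at hz₀r; exact hr.ne' hz₀r.symm
  haveI : Nonempty (Metric.sphere (0:ℂ) r) := hne.to_subtype
  have hbdd : BddAbove (Set.range fun z : Metric.sphere (0:ℂ) r => f z) := by
    refine ⟨f z₀, ?_⟩
    rintro y ⟨z, rfl⟩
    exact hmax z.2
  have hsup' : f z₀ = 1 + r + r ^ 2 := by
    rw [← hsup]
    refine le_antisymm (le_ciSup hbdd ⟨z₀, hz₀mem⟩) (ciSup_le fun z => hmax z.2)
  -- norms of the three terms
  have hδkne : δk ≠ 0 := by
    intro h; rw [h] at hδk; simp at hδk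
  have hb : ‖δk1 * z₀‖ = r := by
    rw [norm_mul, hδk1, hz₀r, one_mul]
  have hcn : ‖δk2 * z₀ ^ 2‖ = r ^ 2 := by
    rw [norm_mul, hδk2, norm_pow, hz₀r, one_mul]
  have hbne : δk1 * z₀ ≠ 0 := by
    intro h; rw [h, norm_zero] at hb; exact hr.ne' hb.symm
  have hcne : δk2 * z₀ ^ 2 ≠ 0 := by
    intro h; rw [h, norm_zero] at hcn; exact (pow_pos hr 2).ne' hcn.symm
  -- rewrite things in terms of norms
  have habc : ‖δk + δk1 * z₀ + δk2 * z₀ ^ 2‖ = ‖δk‖ + ‖δk1 * z₀‖ + ‖δk2 * z₀ ^ 2‖ := by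
    simp only [hδk, hb, hcn]
    exact hsup'
  have hab : ‖δk + δk1 * z₀‖ = ‖δk‖ + ‖δk1 * z₀‖ := by
    refine le_antisymm (norm_add_le _ _) ?_
    have h1 : ‖δk + δk1 * z₀ + δk2 * z₀ ^ 2‖ ≤ ‖δk + δk1 * z₀‖ + ‖δk2 * z₀ ^ 2‖ :=
      norm_add_le _ _
    rw [habc] at h1; linarith
  have habc2 : ‖(δk + δk1 * z₀) + δk2 * z₀ ^ 2‖ = ‖δk + δk1 * z₀‖ + ‖δk2 * z₀ ^ 2‖ := by
    rw [habc, hab]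
  have hray1 : SameRay ℝ δk (δk1 * z₀) := sameRay_iff_norm_add.mpr hab
  have hray2 : SameRay ℝ (δk + δk1 * z₀) (δk2 * z₀ ^ 2) := sameRay_iff_norm_add.mpr habc2
  -- first alignment: δk1 * z₀ = r * δk
  have hrC : (r : ℂ) ≠ 0 := by exact_mod_cast hr.ne'
  have e1 : δk1 * z₀ = (r : ℂ) * δk := by
    have h := hray1.inv_norm_smul_eq hδkne hbne
    simp only [hδk, hb, inv_one, one_smul] at h
    rw [h, Complex.real_smul]
    push_cast
    rw [mul_inv_cancel_left₀ hrC]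
  have h1rC : (1 : ℂ) + r ≠ 0 := by
    intro h
    have : (1 : ℝ) + r = 0 := by exact_mod_cast h
    linarith
  have hsum : δk + δk1 * z₀ = (1 + (r : ℂ)) * δk := by rw [e1]; ring
  have habne : δk + δk1 * z₀ ≠ 0 := by
    rw [hsum]; exact mul_ne_zero h1rC hδkne
  -- second alignment: δk2 * z₀ ^ 2 = r ^ 2 * δk
  have hab' : ‖δk + δk1 * z₀‖ = 1 + r := by
    have := hab
    simp only [hδk, hb] at this
    exact this
  have e2 : δk2 * z₀ ^ 2 = (r : ℂ) ^ 2 * δk := by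
    have h := hray2.inv_norm_smul_eq habne hcne
    simp only [hab', hcn] at h
    rw [hsum, Complex.real_smul, Complex.real_smul] at h
    push_cast at h
    rw [inv_mul_cancel_left₀ h1rC] at h
    rw [h, mul_inv_cancel_left₀ (pow_ne_zero 2 hrC)]
  have key : δk * δk2 * z₀ ^ 2 = δk1 ^ 2 * z₀ ^ 2 := by
    calc δk * δk2 * z₀ ^ 2 = δk * (δk2 * z₀ ^ 2) := by ring
    _ = δk * ((r : ℂ) ^ 2 * δk) := by rw [e2]
    _ = ((r : ℂ) * δk) ^ 2 := by ring
    _ = (δk1 * z₀) ^ 2 := by rw [e1]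
    _ = δk1 ^ 2 * z₀ ^ 2 := by ring
  exact mul_right_cancel₀ (pow_ne_zero 2 hz₀ne) key
end

section
/- Let T : Hol(𝔻) → Hol(𝔻) be a continuous linear operator which is isometric for some seminorm ‖·‖_{∞,r} with 0 < r < 1, and suppose T𝟙 = α𝟙 with |α| = 1 (where 𝟙 is the constant function 1). Then for every n ≥ 1, the set {z : |z| = rⁿ} is contained in the image (T e_n)(closed disc of radius r), where e_n(z) = zⁿ. -/
open Metric Complex Set

/-- The sup seminorm `‖f‖_{∞,r} = sup_{|z| ≤ r} |f(z)|`. -/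
noncomputable def supNorm (r : ℝ) (f : ℂ → ℂ) : ℝ :=
  ⨆ z : Metric.closedBall (0:ℂ) r, ‖f (z : ℂ)‖

/-- `Hol(𝔻)`: the space of holomorphic functions on the open unit disc,
as a submodule of `ℂ → ℂ`. -/
noncomputable def HolD : Submodule ℂ (ℂ → ℂ) where
  carrier := {f | DifferentiableOn ℂ f (Metric.ball 0 1)}
  add_mem' := fun hf hg => hf.add hg
  zero_mem' := differentiableOn_const 0
  smul_mem' := fun c _ hf => hf.const_smul c

lemma supNorm_eq_of {r : ℝ} (hr : 0 ≤ r) (M : ℝ) (f : ℂ → ℂ)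
    (hub : ∀ z ∈ Metric.closedBall (0:ℂ) r, ‖f z‖ ≤ M)
    (hex : ∃ z ∈ Metric.closedBall (0:ℂ) r, ‖f z‖ = M) :
    supNorm r f = M := by
  haveI : Nonempty (Metric.closedBall (0:ℂ) r) := ⟨⟨0, Metric.mem_closedBall_self hr⟩⟩
  obtain ⟨z₀, hz₀, hz₀'⟩ := hex
  refine le_antisymm (ciSup_le fun z => hub z z.2) ?_
  rw [← hz₀']
  exact le_ciSup (f := fun z : Metric.closedBall (0:ℂ) r => ‖f (z:ℂ)‖)
    ⟨M, by rintro x ⟨z, rfl⟩; exact hub z z.2⟩ ⟨z₀, hz₀⟩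

lemma supNorm_attained {r : ℝ} (hr : 0 ≤ r) (f : ℂ → ℂ)
    (hf : ContinuousOn f (Metric.closedBall (0:ℂ) r)) :
    ∃ z ∈ Metric.closedBall (0:ℂ) r,
      ‖f z‖ = supNorm r f ∧
      ∀ y ∈ Metric.closedBall (0:ℂ) r, ‖f y‖ ≤ supNorm r f := by
  obtain ⟨z, hz, hmax⟩ := (isCompact_closedBall (0:ℂ) r).exists_isMaxOn
    ⟨0, Metric.mem_closedBall_self hr⟩ (continuous_norm.comp_continuousOn hf)
  have hmax' : ∀ y ∈ Metric.closedBall (0:ℂ) r, ‖f y‖ ≤ ‖f z‖ :=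
    fun y hy => hmax hy
  have h := supNorm_eq_of hr (‖f z‖) f hmax' ⟨z, hz, rfl⟩
  exact ⟨z, hz, h.symm, by rw [h]; exact hmax'⟩

lemma supNorm_pow {r : ℝ} (hr : 0 ≤ r) (n : ℕ) :
    supNorm r (fun z : ℂ => z ^ n) = r ^ n := by
  refine supNorm_eq_of hr _ _ (fun z hz => ?_) ⟨(r:ℂ), by
    simp [Metric.mem_closedBall, Complex.dist_eq, _root_.abs_of_nonneg hr], by
    simp [norm_pow, Complex.norm_of_nonneg hr, _root_.abs_of_nonneg hr]⟩
  simp only [norm_pow]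
  exact pow_le_pow_left₀ (norm_nonneg z) (by simpa using hz) n

lemma supNorm_pow_sub_const {r : ℝ} (hr : 0 < r) {n : ℕ} (hn : 1 ≤ n) {c : ℂ}
    (hc : ‖c‖ = r ^ n) :
    supNorm r (fun z : ℂ => z ^ n - c) = 2 * r ^ n := by
  obtain ⟨z₀, hz₀⟩ := Complex.isAlgClosed.exists_pow_nat_eq (-c) (by omega : 0 < n)
  have habs : ‖z₀‖ ^ n = r ^ n := by
    rw [← norm_pow, hz₀, norm_neg, hc]
  have hz₀r : ‖z₀‖ = r := by
    exact (pow_left_strictMonoOn₀ (M₀ := ℝ) (by omega : n ≠ 0)).injOn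
      (Set.mem_setOf.2 (norm_nonneg z₀)) (Set.mem_setOf.2 hr.le) habs
  refine supNorm_eq_of hr.le _ _ (fun z hz => ?_) ⟨z₀, ?_, ?_⟩
  · calc ‖z ^ n - c‖ ≤ ‖z ^ n‖ + ‖c‖ :=
        norm_sub_le _ _
    _ ≤ r ^ n + r ^ n := by
        rw [hc, norm_pow]
        have hzr : ‖z‖ ≤ r := by simpa using hz
        exact add_le_add (pow_le_pow_left₀ (norm_nonneg z) hzr n) le_rfl
    _ = 2 * r ^ n := by ring
  · simp [Metric.mem_closedBall, Complex.dist_eq, hz₀r]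
  · rw [hz₀, show -c - c = -(2 * c) by ring, norm_neg, norm_mul, hc]
    simp

lemma eq_neg_of_abs_sub {a b : ℂ} (h : ‖a - b‖ = ‖a‖ + ‖b‖)
    (hab : ‖a‖ = ‖b‖) (ha : a ≠ 0) : a = -b := by
  have hb : -b ≠ 0 := by
    intro h0
    exact ha (norm_eq_zero.mp (by rw [hab, ← norm_neg, h0, norm_zero]))
  have h' : ‖a + -b‖ = ‖a‖ + ‖-b‖ := by
    rwa [norm_neg, ← sub_eq_add_neg]
  have harg := (Complex.norm_add_eq_iff.mp h').resolve_left ha |>.resolve_left hb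
  exact Complex.ext_norm_arg (by rw [hab, norm_neg]) harg

/-- Step 2: If `T` is a continuous linear operator on `Hol(𝔻)`,
isometric for `‖·‖_{∞,r}`, and sends the constant `𝟙` to `α 𝟙` with `|α| = 1`,
then for every `n ≥ 1` the circle `rⁿ𝕋` is contained in the image of the
closed disc of radius `r` under `T eₙ`, where `eₙ(z) = zⁿ`. -/
theorem circle_in_image_of_Ten
    (r : ℝ) (hr : 0 < r) (hr1 : r < 1)
    (T : HolD →ₗ[ℂ] HolD)
    (hcont : ∀ ρ : ℝ, 0 < ρ → ρ < 1 → ∃ C s : ℝ, 0 < s ∧ s < 1 ∧ 0 ≤ C ∧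
      ∀ f : HolD, supNorm ρ (T f).1 ≤ C * supNorm s f.1)
    (hiso : ∀ f : HolD, supNorm r (T f).1 = supNorm r f.1)
    (α : ℂ) (hα : ‖α‖ = 1)
    (hone : T ⟨fun _ => 1, differentiableOn_const 1⟩
      = α • (⟨fun _ => 1, differentiableOn_const 1⟩ : HolD))
    (n : ℕ) (hn : 1 ≤ n) :
    Metric.sphere (0:ℂ) (r ^ n) ⊆
      (T ⟨fun z => z ^ n, (differentiable_pow n).differentiableOn⟩).1 ''
        Metric.closedBall (0:ℂ) r := by
  set en : HolD := ⟨fun z => z ^ n, (differentiable_pow n).differentiableOn⟩ with hen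
  set one : HolD := ⟨fun _ => 1, differentiableOn_const 1⟩ with honedef
  set g : ℂ → ℂ := (T en).1 with hg
  have hα0 : α ≠ 0 := by
    intro h0; rw [h0, norm_zero] at hα; norm_num at hα
  have hrn : (0:ℝ) < r ^ n := pow_pos hr n
  -- g is continuous on the closed ball
  have hgc : ContinuousOn g (Metric.closedBall (0:ℂ) r) :=
    ((T en).2.continuousOn).mono
      ((closedBall_subset_ball hr1).trans (by norm_num))
  -- sup norm of g is r^n
  have hgsup : supNorm r g = r ^ n := by
    rw [hg, hiso en, hen]
    exact supNorm_pow hr.le n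
  -- key claim: every w with |w| = r^n has -w in the image
  have key : ∀ w : ℂ, ‖w‖ = r ^ n →
      ∃ z ∈ Metric.closedBall (0:ℂ) r, g z = -w := by
    intro w hw
    set c : ℂ := α⁻¹ * w with hc
    have hcabs : ‖c‖ = r ^ n := by
      rw [hc, norm_mul, norm_inv, hα, hw]; ring
    have hcw : c * α = w := by
      rw [hc, mul_comm, ← mul_assoc, mul_inv_cancel₀ hα0, one_mul]
    set u : HolD := en - c • one with hu
    have hTu : T u = T en - w • one := by
      rw [hu, map_sub, map_smul, hone, smul_smul, hcw]
    have huval : (u : ℂ → ℂ) = fun z => z ^ n - c := by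
      funext z
      rw [hu]
      simp [hen, honedef]
    have hTusup : supNorm r (fun z => g z - w) = 2 * r ^ n := by
      have h1 : ((T u : HolD) : ℂ → ℂ) = fun z => g z - w := by
        rw [hTu]
        funext z
        simp [hg, honedef]
      have := hiso u
      rw [h1, huval] at this
      rw [this]
      exact supNorm_pow_sub_const hr hn hcabs
    -- attain the sup
    obtain ⟨z₀, hz₀, hz₀max, _⟩ := supNorm_attained hr.le (fun z => g z - w)
      (hgc.sub continuousOn_const)
    rw [hTusup] at hz₀max
    -- bound |g z₀| ≤ r^n
    obtain ⟨_, _, _, hgle⟩ := supNorm_attained hr.le g hgc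
    have hgz₀ : ‖g z₀‖ ≤ r ^ n := hgsup ▸ hgle z₀ hz₀
    -- triangle equality forces |g z₀| = r^n
    have htri : ‖g z₀ - w‖ ≤ ‖g z₀‖ + ‖w‖ :=
      norm_sub_le _ _
    have habs : ‖g z₀‖ = r ^ n := by
      rw [hz₀max, hw] at htri
      linarith
    have heq : ‖g z₀ - w‖ = ‖g z₀‖ + ‖w‖ := by
      rw [hz₀max, habs, hw]; ring
    have hne : g z₀ ≠ 0 := by
      intro h0; rw [h0, norm_zero] at habs; linarith
    exact ⟨z₀, hz₀, eq_neg_of_abs_sub heq (by rw [habs, hw]) hne⟩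
  -- conclude
  intro w hw
  have hw' : ‖w‖ = r ^ n := by
    simpa [Complex.dist_eq] using hw
  have hnw : ‖-w‖ = r ^ n := by rwa [norm_neg]
  obtain ⟨z, hz, hgz⟩ := key (-w) hnw
  exact ⟨z, hz, by rw [hgz, neg_neg]⟩
end

section
/- Let φ : 𝔻 → 𝔻 be holomorphic, not a bijective elliptic automorphism, so that its iterates φ^{[n]} converge uniformly on compact subsets of 𝔻 to a constant ω ∈ closure(𝔻) (Denjoy–Wolff point). Then C_φ is not similar to any linear isometry of Hol(𝔻): there is no invertible continuous linear operator U on Hol(𝔻) with U^{-1} C_φ U isometric for all seminorms ‖·‖_{∞,1−1/p}. -/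
open Metric Complex Set

/-- The composition operator `C_φ : f ↦ f ∘ φ` on `Hol(𝔻)`. -/
noncomputable def compOp (φ : ℂ → ℂ) (hφd : DifferentiableOn ℂ φ (Metric.ball 0 1))
    (hφm : Set.MapsTo φ (Metric.ball 0 1) (Metric.ball 0 1)) : HolD →ₗ[ℂ] HolD where
  toFun f := ⟨fun z => f.1 (φ z), f.2.comp hφd hφm⟩
  map_add' _ _ := Subtype.ext rfl
  map_smul' _ _ := Subtype.ext rfl

lemma supNorm_nonneg (r : ℝ) (f : ℂ → ℂ) : 0 ≤ supNorm r f :=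
  Real.iSup_nonneg fun _ => norm_nonneg _

lemma bddAbove_aux {r : ℝ} (hr : 0 ≤ r) {f : ℂ → ℂ}
    (hf : ContinuousOn f (Metric.closedBall (0:ℂ) r)) :
    BddAbove (Set.range fun z : Metric.closedBall (0:ℂ) r => ‖f (z : ℂ)‖) := by
  have h : (fun w => ‖f w‖) '' Metric.closedBall (0:ℂ) r
      = Set.range fun z : Metric.closedBall (0:ℂ) r => ‖f (z : ℂ)‖ :=
    Set.image_eq_range _ _
  rw [← h]
  exact ((isCompact_closedBall (0:ℂ) r).image_of_continuousOn
    (continuous_norm.comp_continuousOn hf)).bddAbove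

lemma le_supNorm {r : ℝ} {f : ℂ → ℂ} (hf : ContinuousOn f (Metric.closedBall (0:ℂ) r))
    {z : ℂ} (hz : z ∈ Metric.closedBall (0:ℂ) r) :
    ‖f z‖ ≤ supNorm r f := by
  have hr : 0 ≤ r := by
    by_contra h
    exact (Metric.closedBall_eq_empty.2 (by linarith)).subset hz
  exact le_ciSup (bddAbove_aux hr hf) ⟨z, hz⟩

lemma supNorm_le {r : ℝ} (hr : 0 ≤ r) {f : ℂ → ℂ} {M : ℝ}
    (h : ∀ z ∈ Metric.closedBall (0:ℂ) r, ‖f z‖ ≤ M) :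
    supNorm r f ≤ M := by
  haveI : Nonempty (Metric.closedBall (0:ℂ) r) :=
    ⟨⟨0, Metric.mem_closedBall_self hr⟩⟩
  exact ciSup_le fun z => h z z.2

lemma supNorm_mono {s r : ℝ} (hs : 0 ≤ s) (hsr : s ≤ r) {f : ℂ → ℂ}
    (hf : ContinuousOn f (Metric.closedBall (0:ℂ) r)) :
    supNorm s f ≤ supNorm r f :=
  supNorm_le hs fun _ hz => le_supNorm hf (Metric.closedBall_subset_closedBall hsr hz)

set_option maxHeartbeats 1600000 in
/-- if the iterates of a holomorphic self-map `φ` of the disc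
(not a bijective elliptic automorphism) converge locally uniformly to a
Denjoy–Wolff constant `ω ∈ closure 𝔻`, then `C_φ` is not similar to any linear
isometry of `Hol(𝔻)`: there is no invertible continuous linear `U` such that
`U⁻¹ C_φ U` is isometric for all the seminorms `‖·‖_{∞,1-1/p}`. -/
theorem non_elliptic_composition_not_similar_to_isometry
    (φ : ℂ → ℂ) (hφd : DifferentiableOn ℂ φ (Metric.ball 0 1))
    (hφm : Set.MapsTo φ (Metric.ball 0 1) (Metric.ball 0 1))
    (hnotell : ¬ (Set.BijOn φ (Metric.ball (0:ℂ) 1) (Metric.ball (0:ℂ) 1)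
      ∧ ∃ a ∈ Metric.ball (0:ℂ) 1, φ a = a))
    (ω : ℂ) (hω : ω ∈ Metric.closedBall (0:ℂ) 1)
    (hDW : TendstoLocallyUniformlyOn (fun (n : ℕ) (z : ℂ) => φ^[n] z)
      (fun _ => ω) Filter.atTop (Metric.ball 0 1)) :
    ¬ ∃ U : HolD ≃ₗ[ℂ] HolD,
      (∀ r : ℝ, 0 < r → r < 1 → ∃ C s : ℝ, 0 < s ∧ s < 1 ∧ 0 ≤ C ∧
        ∀ f : HolD, supNorm r (U f).1 ≤ C * supNorm s f.1) ∧
      (∀ r : ℝ, 0 < r → r < 1 → ∃ C s : ℝ, 0 < s ∧ s < 1 ∧ 0 ≤ C ∧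
        ∀ f : HolD, supNorm r (U.symm f).1 ≤ C * supNorm s f.1) ∧
      ∀ (f : HolD) (p : ℕ), 0 < p →
        supNorm (1 - 1 / (p : ℝ)) ((U.symm (compOp φ hφd hφm (U f))).1)
          = supNorm (1 - 1 / (p : ℝ)) f.1 := by
  rintro ⟨U, hU, hUsymm, hiso⟩
  -- iterates of φ are differentiable on the ball and map the ball into itself
  have hiter : ∀ n : ℕ, DifferentiableOn ℂ (φ^[n]) (Metric.ball 0 1) ∧
      Set.MapsTo (φ^[n]) (Metric.ball (0:ℂ) 1) (Metric.ball (0:ℂ) 1) := by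
    intro n
    induction n with
    | zero => exact ⟨differentiableOn_id, Set.mapsTo_id _⟩
    | succ n ih =>
      rw [Function.iterate_succ]
      exact ⟨ih.1.comp hφd hφm, ih.2.comp hφm⟩
  -- the test function g(z) = z - ω
  set g : HolD := ⟨fun z => z - ω, differentiableOn_id.sub (differentiableOn_const ω)⟩
    with hg
  -- gₙ := g ∘ φ^[n]
  set G : ℕ → HolD := fun n => ⟨fun z => φ^[n] z - ω,
    (hiter n).1.sub (differentiableOn_const ω)⟩ with hG
  have hG0 : G 0 = g := by
    apply Subtype.ext; funext z; simp [hG, hg]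
  -- seminorm preservation along the iterates
  have key : ∀ (p : ℕ), 0 < p → ∀ n : ℕ,
      supNorm (1 - 1/(p:ℝ)) ((U.symm (G n)).1) = supNorm (1 - 1/(p:ℝ)) ((U.symm g).1) := by
    intro p hp n
    induction n with
    | zero => rw [hG0]
    | succ n ih =>
      have h1 := hiso (U.symm (G n)) p hp
      rw [U.apply_symm_apply] at h1
      have h2 : compOp φ hφd hφm (G n) = G (n+1) := by
        apply Subtype.ext; funext z
        show φ^[n] (φ z) - ω = φ^[n+1] z - ω
        rw [Function.iterate_succ_apply]
      rw [h2] at h1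
      rw [h1, ih]
  -- all the seminorms `‖·‖_{∞,1-1/p}` of `U.symm g` vanish
  have hvanish : ∀ (p : ℕ), 2 ≤ p → supNorm (1 - 1/(p:ℝ)) ((U.symm g).1) = 0 := by
    intro p hp
    have hp0 : (0:ℝ) < p := by positivity
    have hp' : (2:ℝ) ≤ p := by exact_mod_cast hp
    have hinv : 0 < 1/(p:ℝ) := by positivity
    have hr0 : 0 < 1 - 1/(p:ℝ) := by
      have : 1/(p:ℝ) ≤ 1/2 := by
        apply one_div_le_one_div_of_le <;> linarith
      linarith
    have hr1 : 1 - 1/(p:ℝ) < 1 := by linarith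
    obtain ⟨C, s, hs0, hs1, hC0, hbound⟩ := hUsymm (1 - 1/(p:ℝ)) hr0 hr1
    have hsub : Metric.closedBall (0:ℂ) s ⊆ Metric.ball (0:ℂ) 1 :=
      Metric.closedBall_subset_ball hs1
    have huc : TendstoUniformlyOn (fun n z => φ^[n] z) (fun _ => ω) Filter.atTop
        (Metric.closedBall (0:ℂ) s) :=
      (tendstoLocallyUniformlyOn_iff_tendstoUniformlyOn_of_compact
        (isCompact_closedBall _ _)).mp (hDW.mono hsub)
    rw [Metric.tendstoUniformlyOn_iff] at huc
    refine le_antisymm (le_of_forall_pos_le_add fun ε hε => ?_) (supNorm_nonneg _ _)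
    have hε' : 0 < ε / (C + 1) := by positivity
    obtain ⟨n, hn⟩ := (huc _ hε').exists
    have hGn : supNorm s ((G n).1) ≤ ε / (C + 1) := by
      refine supNorm_le hs0.le fun z hz => ?_
      have := hn z hz
      rw [dist_comm, Complex.dist_eq] at this
      exact this.le
    have h3 : supNorm (1 - 1/(p:ℝ)) ((U.symm g).1) ≤ C * supNorm s ((G n).1) := by
      rw [← key p (by omega) n]; exact hbound (G n)
    have h4 : C * supNorm s ((G n).1) ≤ C * (ε / (C + 1)) :=
      mul_le_mul_of_nonneg_left hGn hC0
    have h5 : C * (ε / (C + 1)) ≤ ε := by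
      rw [mul_div_assoc'] at *
      rw [div_le_iff₀ (by linarith : (0:ℝ) < C + 1)]
      nlinarith
    linarith
  -- hence every seminorm of `U.symm g` vanishes, by monotonicity
  have hvanish' : ∀ s' : ℝ, 0 < s' → s' < 1 → supNorm s' ((U.symm g).1) = 0 := by
    intro s' hs'0 hs'1
    have h1s : 0 < 1 - s' := by linarith
    obtain ⟨p, hp2, hple⟩ : ∃ p : ℕ, 2 ≤ p ∧ 1/(1 - s') ≤ (p:ℝ) :=
      ⟨max 2 ⌈1/(1 - s')⌉₊, le_max_left _ _,
        le_trans (Nat.le_ceil _) (by exact_mod_cast le_max_right 2 ⌈1/(1 - s')⌉₊)⟩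
    have hp0 : (0:ℝ) < p := by
      have : (2:ℝ) ≤ p := by exact_mod_cast hp2
      linarith
    have hs'le : s' ≤ 1 - 1/(p:ℝ) := by
      rw [div_le_iff₀ h1s] at hple
      have h6 : 1/(p:ℝ) ≤ 1 - s' := by
        rw [div_le_iff₀ hp0]; nlinarith
      linarith
    have hlt : 1 - 1/(p:ℝ) < 1 := by
      have : 0 < 1/(p:ℝ) := by positivity
      linarith
    have hcont : ContinuousOn ((U.symm g).1) (Metric.closedBall (0:ℂ) (1 - 1/(p:ℝ))) :=
      ((U.symm g).2.continuousOn).mono (Metric.closedBall_subset_ball hlt)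
    have := supNorm_mono hs'0.le hs'le hcont
    rw [hvanish p hp2] at this
    exact le_antisymm this (supNorm_nonneg _ _)
  -- now use continuity of U to conclude that g itself has vanishing seminorm
  obtain ⟨C', s', hs'0, hs'1, hC'0, hbound'⟩ := hU (1/2) (by norm_num) (by norm_num)
  have hgz : supNorm (1/2) (g.1) = 0 := by
    have h := hbound' (U.symm g)
    rw [U.apply_symm_apply, hvanish' s' hs'0 hs'1, mul_zero] at h
    exact le_antisymm h (supNorm_nonneg _ _)
  -- contradiction: |z - ω| cannot vanish for all |z| ≤ 1/2
  have hcontg : ContinuousOn (g.1) (Metric.closedBall (0:ℂ) (1/2)) :=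
    (continuous_id.sub continuous_const).continuousOn
  have h0 : ‖(0:ℂ) - ω‖ = 0 := by
    have := le_supNorm hcontg (Metric.mem_closedBall_self (by norm_num : (0:ℝ) ≤ 1/2))
    rw [hgz] at this
    exact le_antisymm this (norm_nonneg _)
  have h1 : ‖(1/4 : ℂ) - ω‖ = 0 := by
    have hmem : (1/4 : ℂ) ∈ Metric.closedBall (0:ℂ) (1/2) := by
      rw [Metric.mem_closedBall, Complex.dist_eq]
      norm_num
    have := le_supNorm hcontg hmem
    rw [hgz] at this
    exact le_antisymm this (norm_nonneg _)
  rw [norm_eq_zero, sub_eq_zero] at h0 h1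
  rw [← h0] at h1
  norm_num at h1
end

section
/- Let N ≥ 2, β a primitive N-th root of unity, θ ∈ ℝ, and f₁, …, f_{N−1} ∈ Hol(𝔻). Define m = exp(iθ + Σ_{k=1}^{N−1} z^k f_k(z^N)). Then there exists w ∈ Hol(𝔻) nonvanishing on 𝔻 such that w(z) m(z) / w(βz) = e^{iθ} for all z ∈ 𝔻; explicitly, w = exp(w̃) where w̃(z) = Σ_{k=1}^{N−1} Σ_{ℓ≥0} (a_ℓ^{(k)}/(β^k − 1)) z^{Nℓ+k} with f_k(z) = Σ_{ℓ≥0} a_ℓ^{(k)} z^ℓ. Consequently M_w W_{m, βz} M_w^{-1} = T_{e^{iθ}, β} on Hol(𝔻). -/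
open Metric Complex Set

/-- let `β` be a primitive `N`-th root of unity (`N ≥ 2`),
`θ ∈ ℝ`, `f₁, …, f_{N-1} ∈ Hol(𝔻)`, and
`m(z) = exp(iθ + ∑_{k=1}^{N-1} zᵏ f_k(z^N))`. Then there is a nonvanishing
`w ∈ Hol(𝔻)` solving the cohomological equation `w(z) m(z) = e^{iθ} w(βz)`;
consequently, conjugating `W_{m,βz}` by `M_w` gives `T_{e^{iθ},β}`:
`w(z)·(m(z)·g(βz)/w(βz)) = e^{iθ} g(βz)` for every `g` and `z ∈ 𝔻`. -/
theorem periodic_weight_conjugate_to_isometry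
    (N : ℕ) (hN : 2 ≤ N) (β : ℂ) (hβN : β ^ N = 1)
    (hβk : ∀ k : ℕ, 1 ≤ k → k < N → β ^ k ≠ 1)
    (θ : ℝ) (f : ℕ → ℂ → ℂ)
    (hf : ∀ k, DifferentiableOn ℂ (f k) (Metric.ball 0 1))
    (m : ℂ → ℂ)
    (hm : ∀ z ∈ Metric.ball (0:ℂ) 1,
      m z = Complex.exp (θ * Complex.I
        + ∑ k ∈ Finset.Icc 1 (N - 1), z ^ k * f k (z ^ N))) :
    ∃ w : ℂ → ℂ, DifferentiableOn ℂ w (Metric.ball 0 1) ∧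
      (∀ z ∈ Metric.ball (0:ℂ) 1, w z ≠ 0) ∧
      (∀ z ∈ Metric.ball (0:ℂ) 1,
        w z * m z = Complex.exp (θ * Complex.I) * w (β * z)) ∧
      ∀ (g : ℂ → ℂ), ∀ z ∈ Metric.ball (0:ℂ) 1,
        w z * (m z * (g (β * z) / w (β * z)))
          = Complex.exp (θ * Complex.I) * g (β * z) := by
  have habsβ : ‖β‖ = 1 := by
    have h1 : ‖β‖ ^ N = 1 := by rw [← norm_pow, hβN, norm_one]
    have h2 : (0:ℝ) ≤ ‖β‖ := norm_nonneg β
    rcases lt_trichotomy ‖β‖ 1 with h | h | h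
    · have := pow_lt_one₀ h2 h (show N ≠ 0 by omega)
      simp [h1] at this
    · exact h
    · have := one_lt_pow₀ h (show N ≠ 0 by omega)
      simp [h1] at this
  have hball : ∀ z ∈ Metric.ball (0:ℂ) 1, β * z ∈ Metric.ball (0:ℂ) 1 := by
    intro z hz
    simp only [Metric.mem_ball, dist_zero_right, norm_mul, habsβ, one_mul] at hz ⊢
    exact hz
  have hpow : ∀ z ∈ Metric.ball (0:ℂ) 1, z ^ N ∈ Metric.ball (0:ℂ) 1 := by
    intro z hz
    simp only [Metric.mem_ball, dist_zero_right, norm_pow] at hz ⊢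
    exact pow_lt_one₀ (norm_nonneg z) hz (by omega)
  -- the solution of the cohomological equation
  set u : ℂ → ℂ :=
    fun z => ∑ k ∈ Finset.Icc 1 (N - 1), z ^ k * f k (z ^ N) / (β ^ k - 1) with hu
  have hβk' : ∀ k ∈ Finset.Icc 1 (N - 1), β ^ k - 1 ≠ 0 := by
    intro k hk
    rw [Finset.mem_Icc] at hk
    exact sub_ne_zero.2 (hβk k hk.1 (by omega))
  have hkey : ∀ z, u (β * z) = u z + ∑ k ∈ Finset.Icc 1 (N - 1), z ^ k * f k (z ^ N) := by
    intro z
    rw [hu]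
    simp only
    rw [← Finset.sum_add_distrib]
    apply Finset.sum_congr rfl
    intro k hk
    have hk' := hβk' k hk
    have hzN : (β * z) ^ N = z ^ N := by rw [mul_pow, hβN, one_mul]
    rw [hzN, mul_pow]
    field_simp
    ring
  set w : ℂ → ℂ := fun z => Complex.exp (u z) with hw
  have hwd : DifferentiableOn ℂ w (Metric.ball 0 1) := by
    apply DifferentiableOn.cexp
    apply DifferentiableOn.fun_sum
    intro k hk
    apply DifferentiableOn.div_const
    apply DifferentiableOn.mul
    · exact (differentiable_pow k).differentiableOn
    · exact (hf k).comp ((differentiable_pow N).differentiableOn) hpow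
  have hwne : ∀ z ∈ Metric.ball (0:ℂ) 1, w z ≠ 0 := fun z _ => Complex.exp_ne_zero _
  have hcoh : ∀ z ∈ Metric.ball (0:ℂ) 1,
      w z * m z = Complex.exp (θ * Complex.I) * w (β * z) := by
    intro z hz
    rw [hm z hz, hw]
    simp only
    rw [hkey z, ← Complex.exp_add, ← Complex.exp_add]
    congr 1
    ring
  refine ⟨w, hwd, hwne, hcoh, ?_⟩
  intro g z hz
  have hne := hwne (β * z) (hball z hz)
  calc w z * (m z * (g (β * z) / w (β * z)))
      = (w z * m z) * g (β * z) / w (β * z) := by ring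
    _ = Complex.exp (θ * Complex.I) * w (β * z) * g (β * z) / w (β * z) := by
        rw [hcoh z hz]
    _ = Complex.exp (θ * Complex.I) * g (β * z) := by
        field_simp
end
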